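/- Fix n ≥ 2 and 1 ≤ k ≤ n, and let (1^k) denote the single-column partition. For every permutation w ∈ S_n and every reduced word (i_1,…,i_ℓ) of w, the β-character of the K-Demazure crystal equals the Lascoux polynomial: Σ_{T ∈ SVT^n_{(i_1,…,i_ℓ)}((1^k))} β^{excess(T)} x^{wt(T)} = ϖ_{i_1} ϖ_{i_2} ⋯ ϖ_{i_ℓ}( x_1 x_2 ⋯ x_k ) in ℤ[β][x_1,…,x_n]. In particular, for any reduced word of the longest element w_0 of S_n, SVT^n_{w_0}((1^k)) = SVT^n((1^k)) and ϖ_{w_0}(x_1⋯x_k) = 𝔊_{(1^k)}(x_1,…,x_n;β). -/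

import Mathlib

open scoped Classical

noncomputable section

namespace SVTCrystal

/-- A filling assigns to each (row, column) position (0-indexed) a finite set of entries. -/
abbrev Filling : Type := ℕ → ℕ → Finset ℕ

/-- `lam` is a partition shape with at most `n` rows. -/
def IsPartitionShape (n : ℕ) (lam : ℕ → ℕ) : Prop :=
  (∀ r, lam (r + 1) ≤ lam r) ∧ (∀ r, n ≤ r → lam r = 0)

/-- Semistandard set-valued tableau of shape `lam` with entries in `{1,…,n}`. -/
structure IsSVT (n : ℕ) (lam : ℕ → ℕ) (t : Filling) : Prop where
  boxNonempty : ∀ r c, c < lam r → (t r c).Nonempty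
  emptyOutside : ∀ r c, ¬ c < lam r → t r c = ∅
  entryBounds : ∀ r c a, a ∈ t r c → 1 ≤ a ∧ a ≤ n
  rowWeak : ∀ r c a b, a ∈ t r c → b ∈ t r (c + 1) → a ≤ b
  colStrict : ∀ r c a b, a ∈ t r c → b ∈ t (r + 1) c → a < b

/-- Semistandard Young tableau: a set-valued tableau all of whose boxes are singletons. -/
def IsSSYT (n : ℕ) (lam : ℕ → ℕ) (t : Filling) : Prop :=
  IsSVT n lam t ∧ ∀ r c, c < lam r → (t r c).card = 1

/-- The weight: `wt n lam t j` is the number of boxes of `t` containing the entry `j`. -/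
def wt (n : ℕ) (lam : ℕ → ℕ) (t : Filling) (j : ℕ) : ℕ :=
  ((Finset.range n ×ˢ Finset.range (lam 0)).filter (fun p => j ∈ t p.1 p.2)).card

/-- The excess: total number of extra entries. -/
def excess (n : ℕ) (lam : ℕ → ℕ) (t : Filling) : ℕ :=
  ∑ p ∈ Finset.range n ×ˢ Finset.range (lam 0), ((t p.1 p.2).card - 1)

/-- Column `c` contains the entry `a`. -/
def colHas (n : ℕ) (t : Filling) (a c : ℕ) : Prop := ∃ r, r < n ∧ a ∈ t r c

/-- The sign of column `c` for the `i`-signature rule: `+` (true) if the column contains `i`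
but not `i+1`, `-` (false) if it contains `i+1` but not `i`. -/
def colSign (n : ℕ) (t : Filling) (i c : ℕ) : Option Bool :=
  if colHas n t i c ∧ ¬ colHas n t (i + 1) c then some true
  else if colHas n t (i + 1) c ∧ ¬ colHas n t i c then some false
  else none

/-- The number of `-` (false) signs left uncanceled after scanning the word left-to-right,
iteratively canceling `-+` pairs. -/
def mctr (w : List Bool) : ℕ := w.foldl (fun cnt b => if b then cnt - 1 else cnt + 1) 0

/-- The number of `+` (true) signs left uncanceled, scanning right-to-left. -/
def pctr (w : List Bool) : ℕ := w.foldr (fun b cnt => if b then cnt + 1 else cnt - 1) 0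

/-- The word of column signs of the columns before column `c`. -/
def colWordBefore (n : ℕ) (t : Filling) (i c : ℕ) : List Bool :=
  (List.range c).filterMap (colSign n t i)

/-- The word of column signs of the columns after column `c` (among columns `< ncols`). -/
def colWordAfter (n ncols : ℕ) (t : Filling) (i c : ℕ) : List Bool :=
  ((List.range ncols).drop (c + 1)).filterMap (colSign n t i)

/-- Column `c` carries an uncanceled `+` for the `i`-signature rule. -/
def PlusCol (n ncols : ℕ) (t : Filling) (i c : ℕ) : Prop :=
  c < ncols ∧ colSign n t i c = some true ∧ mctr (colWordBefore n t i c) = 0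

/-- Column `c` carries an uncanceled `-` for the `i`-signature rule. -/
def MinusCol (n ncols : ℕ) (t : Filling) (i c : ℕ) : Prop :=
  c < ncols ∧ colSign n t i c = some false ∧ pctr (colWordAfter n ncols t i c) = 0

/-- Column `c` is the rightmost uncanceled `+`. -/
def fBoxCol (n ncols : ℕ) (t : Filling) (i c : ℕ) : Prop :=
  PlusCol n ncols t i c ∧ ∀ c', PlusCol n ncols t i c' → c' ≤ c

/-- Column `c` is the leftmost uncanceled `-`. -/
def eBoxCol (n ncols : ℕ) (t : Filling) (i c : ℕ) : Prop :=
  MinusCol n ncols t i c ∧ ∀ c', MinusCol n ncols t i c' → c ≤ c'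

/-- Replace the content of the box in row `r`, column `c` by `A`. -/
def updateBox (t : Filling) (r c : ℕ) (A : Finset ℕ) : Filling :=
  fun r' c' => if r' = r ∧ c' = c then A else t r' c'

/-- The set-valued crystal operator `f_i` (signature rule). -/
def fRaw (n : ℕ) (lam : ℕ → ℕ) (i : ℕ) (t : Filling) : Option Filling :=
  if h : ∃ c, fBoxCol n (lam 0) t i c then
    let c := Classical.choose h
    if hr : ∃ r, r < n ∧ i ∈ t r c then
      let r := Classical.choose hr
      if i ∈ t r (c + 1) then
        some (updateBox (updateBox t r (c + 1) ((t r (c + 1)).erase i)) r c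
          (insert (i + 1) (t r c)))
      else some (updateBox t r c (insert (i + 1) ((t r c).erase i)))
    else none
  else none

/-- The set-valued crystal operator `e_i` (signature rule). -/
def eRaw (n : ℕ) (lam : ℕ → ℕ) (i : ℕ) (t : Filling) : Option Filling :=
  if h : ∃ c, eBoxCol n (lam 0) t i c then
    let c := Classical.choose h
    if hr : ∃ r, r < n ∧ (i + 1) ∈ t r c then
      let r := Classical.choose hr
      if 0 < c ∧ (i + 1) ∈ t r (c - 1) then
        some (updateBox (updateBox t r (c - 1) ((t r (c - 1)).erase (i + 1))) r c
          (insert i (t r c)))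
      else some (updateBox t r c (insert i ((t r c).erase (i + 1))))
    else none
  else none

/-- Iterate a partially-defined operator. -/
def iterOpt (g : Filling → Option Filling) : ℕ → Filling → Option Filling
  | 0, t => some t
  | m + 1, t => (iterOpt g m t).bind g

/-- Highest weight (Yamanouchi) elements. -/
def IsYamanouchi (n : ℕ) (lam : ℕ → ℕ) (t : Filling) : Prop :=
  ∀ i, 1 ≤ i → i < n → eRaw n lam i t = none

/-- Closure of `t0` under the crystal operators `e_i`, `f_i` for `1 ≤ i < n`. -/
inductive Reach (n : ℕ) (lam : ℕ → ℕ) (t0 : Filling) : Filling → Prop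
  | base : Reach n lam t0 t0
  | stepF : ∀ {t t' : Filling} (i : ℕ), 1 ≤ i → i < n → Reach n lam t0 t →
      fRaw n lam i t = some t' → Reach n lam t0 t'
  | stepE : ∀ {t t' : Filling} (i : ℕ), 1 ≤ i → i < n → Reach n lam t0 t →
      eRaw n lam i t = some t' → Reach n lam t0 t'

/-- The one-row partition `(s)`. -/
def rowShape (s : ℕ) : ℕ → ℕ := fun r => if r = 0 then s else 0

/-- The one-column partition `(1^k)`. -/
def colShape (k : ℕ) : ℕ → ℕ := fun r => if r < k then 1 else 0

/-- The hook partition `(s, 1^e)`. -/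
def hookShape (s e : ℕ) : ℕ → ℕ := fun r => if r = 0 then s else if r ≤ e then 1 else 0

/-! ### K-theory crystal operators (for single rows and single columns) -/

/-- Some box of the tableau contains the entry `a`. -/
def containsEntry (n : ℕ) (lam : ℕ → ℕ) (t : Filling) (a : ℕ) : Prop :=
  ∃ r c, r < n ∧ c < lam r ∧ a ∈ t r c

/-- `p` is the rightmost box of `t` containing `i`. -/
def KBoxF (n : ℕ) (lam : ℕ → ℕ) (t : Filling) (i : ℕ) (p : ℕ × ℕ) : Prop :=
  p.1 < n ∧ p.2 < lam p.1 ∧ i ∈ t p.1 p.2 ∧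
    ∀ q : ℕ × ℕ, q.1 < n → q.2 < lam q.1 → i ∈ t q.1 q.2 → q.2 ≤ p.2

/-- The K-crystal operator `f_i^K`: if `i` occurs in `t` and `i+1` does not, add `i+1` to
the rightmost box containing `i`; otherwise `0`. -/
def fK (n : ℕ) (lam : ℕ → ℕ) (i : ℕ) (t : Filling) : Option Filling :=
  if h : (∃ p : ℕ × ℕ, KBoxF n lam t i p) ∧ ¬ containsEntry n lam t (i + 1) then
    let p := Classical.choose h.1
    some (updateBox t p.1 p.2 (insert (i + 1) (t p.1 p.2)))
  else none

/-- The K-crystal operator `e_i^K`: delete `i+1` from the box containing both `i` and `i+1`,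
if such a box exists; otherwise `0`. -/
def eK (n : ℕ) (lam : ℕ → ℕ) (i : ℕ) (t : Filling) : Option Filling :=
  if h : ∃ p : ℕ × ℕ, p.1 < n ∧ p.2 < lam p.1 ∧ i ∈ t p.1 p.2 ∧ (i + 1) ∈ t p.1 p.2 then
    let p := Classical.choose h
    some (updateBox t p.1 p.2 ((t p.1 p.2).erase (i + 1)))
  else none

/-- `t'` is the result of applying `g` to `t` as many times as possible. -/
def MaxApply (g : Filling → Option Filling) (t t' : Filling) : Prop :=
  (∃ m, iterOpt g m t = some t') ∧ g t' = none

/-- One Demazure step: apply `e_i` as many times as possible, then `e_i^K` as many times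
as possible (here `eKop i` is the `i`-th K-operator). -/
def DemStep (n : ℕ) (lam : ℕ → ℕ) (eKop : ℕ → Filling → Option Filling) (i : ℕ)
    (t t' : Filling) : Prop :=
  ∃ t1, MaxApply (eRaw n lam i) t t1 ∧ MaxApply (eKop i) t1 t'

/-- `DemReach n lam eKop [i₁,…,iℓ] t u` holds when
`u = (e_{iℓ}^K)^max e_{iℓ}^max ⋯ (e_{i₁}^K)^max e_{i₁}^max t`. -/
def DemReach (n : ℕ) (lam : ℕ → ℕ) (eKop : ℕ → Filling → Option Filling) :
    List ℕ → Filling → Filling → Prop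
  | [], t, u => t = u
  | i :: rest, t, u => ∃ t2, DemStep n lam eKop i t t2 ∧ DemReach n lam eKop rest t2 u

/-- The minimal highest weight tableau `u_λ`, whose row `r` boxes are all `{r+1}`. -/
def uTab (lam : ℕ → ℕ) : Filling := fun r c => if c < lam r then {r + 1} else ∅

/-- The K-Demazure crystal associated with a word `[i₁,…,iℓ]`. -/
def KDem (n : ℕ) (lam : ℕ → ℕ) (eKop : ℕ → Filling → Option Filling) (word : List ℕ) :
    Set Filling :=
  {t | IsSVT n lam t ∧ DemReach n lam eKop word t (uTab lam)}

/-! ### Permutations and reduced words -/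

/-- The permutation `s_{i₁} ⋯ s_{iℓ}` of a word `[i₁,…,iℓ]`, where `s_i` swaps `i`, `i+1`. -/
def wordPerm (word : List ℕ) : Equiv.Perm ℕ :=
  (word.map fun i => Equiv.swap i (i + 1)).prod

/-- `word` is a reduced word for `w` in the Coxeter generators `s_1, …, s_{n-1}`. -/
def IsReducedWord (n : ℕ) (w : Equiv.Perm ℕ) (word : List ℕ) : Prop :=
  (∀ i ∈ word, 1 ≤ i ∧ i < n) ∧ wordPerm word = w ∧
    ∀ word' : List ℕ, (∀ i ∈ word', 1 ≤ i ∧ i < n) → wordPerm word' = w →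
      word.length ≤ word'.length

/-- The Coxeter length of a permutation of `{1,…,n}`. -/
def permLength (n : ℕ) (σ : Equiv.Perm ℕ) : ℕ :=
  sInf {l | ∃ word : List ℕ, (∀ i ∈ word, 1 ≤ i ∧ i < n) ∧ wordPerm word = σ ∧
    word.length = l}

/-- The parabolic subgroup generated by `s_2, …, s_{n-1}`. -/
def parabolic (n : ℕ) : Subgroup (Equiv.Perm ℕ) :=
  Subgroup.closure {σ | ∃ i, 2 ≤ i ∧ i < n ∧ σ = Equiv.swap i (i + 1)}

/-! ### Polynomials -/

/-- Polynomials in `x₁, x₂, …` over `ℤ[β]`; the variable `β` is `Polynomial.X`. -/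
abbrev KPoly : Type := MvPolynomial ℕ (Polynomial ℤ)

/-- The scalar `β`. -/
def betaP : KPoly := MvPolynomial.C Polynomial.X

/-- The monomial `x^{wt(T)} = x₁^{wt₁} ⋯ xₙ^{wtₙ}`. -/
def xwt (n : ℕ) (lam : ℕ → ℕ) (t : Filling) : KPoly :=
  ∏ j ∈ Finset.Icc 1 n, (MvPolynomial.X j : KPoly) ^ wt n lam t j

/-- The β-character `∑_{T ∈ S} β^{excess T} x^{wt T}` of a set of tableaux. -/
def charSet (n : ℕ) (lam : ℕ → ℕ) (S : Set Filling) : KPoly :=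
  ∑ᶠ t ∈ S, betaP ^ excess n lam t * xwt n lam t

/-- The symmetric Grothendieck polynomial `𝔊_λ(x₁,…,xₙ; β)`. -/
def Groth (n : ℕ) (lam : ℕ → ℕ) : KPoly :=
  charSet n lam {t | IsSVT n lam t}

/-- The Schur polynomial `s_μ(x₁,…,xₙ)`. -/
def SchurP (n : ℕ) (mu : ℕ → ℕ) : KPoly :=
  ∑ᶠ t ∈ {t : Filling | IsSSYT n mu t}, xwt n mu t

/-- The numerator defining the Demazure–Lascoux operator `ϖ_i`. -/
def DLnum (i : ℕ) (f : KPoly) : KPoly :=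
  (MvPolynomial.X i + betaP * MvPolynomial.X i * MvPolynomial.X (i + 1)) * f -
    (MvPolynomial.X (i + 1) + betaP * MvPolynomial.X i * MvPolynomial.X (i + 1)) *
      (MvPolynomial.rename (Equiv.swap i (i + 1)) f)

/-- `DL` implements the Demazure–Lascoux operators `ϖ_i` for `1 ≤ i < n`:
`(x_i - x_{i+1}) · ϖ_i f` equals the defining numerator. -/
def IsDLOp (n : ℕ) (DL : ℕ → KPoly → KPoly) : Prop :=
  ∀ i, 1 ≤ i → i < n → ∀ f : KPoly,
    (MvPolynomial.X i - MvPolynomial.X (i + 1)) * DL i f = DLnum i f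

/-- `applyDL DL [i₁,…,iℓ] f = ϖ_{i₁} ϖ_{i₂} ⋯ ϖ_{iℓ} f`. -/
def applyDL (DL : ℕ → KPoly → KPoly) : List ℕ → KPoly → KPoly
  | [], f => f
  | i :: rest, f => DL i (applyDL DL rest f)


/-! ### Auxiliary development for the proof -/

section Aux

open Finset MvPolynomial

/-! #### Generic `iterOpt` lemmas -/

theorem iterOpt_eq_of_none {g : Filling → Option Filling} {t : Filling} (hg : g t = none) :
    ∀ m t', iterOpt g m t = some t' → t' = t := by
  intro m
  induction m with
  | zero => intro t' h; cases h; rfl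
  | succ m ih =>
    intro t' h
    rw [iterOpt] at h
    rcases hm : iterOpt g m t with _ | u
    · rw [hm] at h; simp at h
    · rw [hm] at h
      have hu := ih u hm
      subst hu
      simp [hg] at h

theorem maxApply_of_none {g : Filling → Option Filling} {t t' : Filling} (hg : g t = none) :
    MaxApply g t t' ↔ t' = t := by
  constructor
  · rintro ⟨⟨m, hm⟩, -⟩; exact iterOpt_eq_of_none hg m t' hm
  · rintro rfl; exact ⟨⟨0, rfl⟩, hg⟩

theorem iterOpt_chain {g : Filling → Option Filling} {t u : Filling}
    (hgt : g t = some u) (hgu : g u = none) :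
    ∀ m t', iterOpt g m t = some t' → t' = t ∨ t' = u := by
  intro m
  induction m with
  | zero => intro t' h; cases h; exact Or.inl rfl
  | succ m ih =>
    intro t' h
    rw [iterOpt] at h
    rcases hm : iterOpt g m t with _ | v
    · rw [hm] at h; simp at h
    · rw [hm] at h
      rcases ih v hm with hv | hv
      · subst hv; right
        simp only [Option.bind_some, hgt] at h
        exact (Option.some_inj.mp h).symm
      · subst hv; simp [hgu] at h

theorem maxApply_of_one {g : Filling → Option Filling} {t u t' : Filling}
    (hgt : g t = some u) (hgu : g u = none) :
    MaxApply g t t' ↔ t' = u := by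
  constructor
  · rintro ⟨⟨m, hm⟩, hend⟩
    rcases iterOpt_chain hgt hgu m t' hm with h | h
    · subst h; rw [hgt] at hend; simp at hend
    · exact h
  · intro h
    subst h
    refine ⟨⟨1, ?_⟩, hgu⟩
    simp [iterOpt, hgt]

/-! #### Column shape basics -/

theorem colShape_le_one (k r : ℕ) : colShape k r ≤ 1 := by
  unfold colShape; split <;> omega

theorem colShape_pos_iff {k r : ℕ} : 0 < colShape k r ↔ r < k := by
  unfold colShape; split <;> omega

variable {n k : ℕ} {t : Filling}

theorem mem_box (ht : IsSVT n (colShape k) t) {r c a : ℕ} (ha : a ∈ t r c) :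
    r < k ∧ c = 0 := by
  by_cases hc : c < colShape k r
  · have h1 : 0 < colShape k r := by omega
    have h2 := colShape_le_one k r
    exact ⟨colShape_pos_iff.mp h1, by omega⟩
  · rw [ht.emptyOutside r c hc] at ha; simp at ha

theorem entry_lt (ht : IsSVT n (colShape k) t) {r a : ℕ} (ha : a ∈ t r 0) :
    ∀ r', r < r' → ∀ b ∈ t r' 0, a < b := by
  intro r'
  induction r' with
  | zero => intro h; omega
  | succ r'' ih =>
    intro hrr b hb
    rcases Nat.lt_succ_iff_lt_or_eq.mp hrr with h | h
    · have hk' : r'' < k := by have := (mem_box ht hb).1; omega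
      obtain ⟨c, hc⟩ := ht.boxNonempty r'' 0 (colShape_pos_iff.mpr hk')
      exact lt_trans (ih h c hc) (ht.colStrict r'' 0 c b hc hb)
    · subst h; exact ht.colStrict r 0 a b ha hb

theorem row_unique (ht : IsSVT n (colShape k) t) {a r r' : ℕ}
    (h1 : a ∈ t r 0) (h2 : a ∈ t r' 0) : r = r' := by
  rcases lt_trichotomy r r' with h | h | h
  · exact absurd (entry_lt ht h1 r' h a h2) (lt_irrefl a)
  · exact h
  · exact absurd (entry_lt ht h2 r h a h1) (lt_irrefl a)

/-- The row containing entry `a` (junk value `0` if there is none). -/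
noncomputable def rowOf (t : Filling) (a : ℕ) : ℕ :=
  if h : ∃ r, a ∈ t r 0 then h.choose else 0

theorem rowOf_mem {t : Filling} {a : ℕ} (h : ∃ r, a ∈ t r 0) : a ∈ t (rowOf t a) 0 := by
  rw [rowOf, dif_pos h]; exact h.choose_spec

theorem rowOf_eq (ht : IsSVT n (colShape k) t) {a r : ℕ} (ha : a ∈ t r 0) :
    rowOf t a = r :=
  row_unique ht (rowOf_mem ⟨r, ha⟩) ha

/-! #### updateBox basics -/

theorem updateBox_apply0 (t : Filling) (r : ℕ) (A : Finset ℕ) (r' : ℕ) :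
    updateBox t r 0 A r' 0 = if r' = r then A else t r' 0 := by
  simp [updateBox]

theorem updateBox_same (t : Filling) (r c : ℕ) (A : Finset ℕ) :
    updateBox t r c A r c = A := by simp [updateBox]

theorem updateBox_ne {r c r' c' : ℕ} (t : Filling) (A : Finset ℕ)
    (h : ¬(r' = r ∧ c' = c)) : updateBox t r c A r' c' = t r' c' := by
  simp only [updateBox, if_neg h]

theorem updateBox_col {r c' : ℕ} (t : Filling) (A : Finset ℕ) (r' : ℕ) (h : c' ≠ 0) :
    updateBox t r 0 A r' c' = t r' c' :=
  updateBox_ne t A (by tauto)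

theorem updateBox_updateBox (t : Filling) (r c : ℕ) (A B : Finset ℕ) :
    updateBox (updateBox t r c A) r c B = updateBox t r c B := by
  funext r' c'
  unfold updateBox
  split <;> rfl

theorem updateBox_self (t : Filling) (r c : ℕ) :
    updateBox t r c (t r c) = t := by
  funext r' c'
  unfold updateBox
  split
  next h => rw [h.1, h.2]
  next => rfl

variable (hk : 1 ≤ k) (hkn : k ≤ n)

theorem colShape_zero (hk : 1 ≤ k) : colShape k 0 = 1 := by
  unfold colShape; rw [if_pos (by omega : 0 < k)]

/-! #### Evaluating the crystal operators on columns -/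

theorem colHas_iff (hkn : k ≤ n) (ht : IsSVT n (colShape k) t) {a : ℕ} :
    colHas n t a 0 ↔ ∃ r, a ∈ t r 0 := by
  constructor
  · rintro ⟨r, -, h⟩; exact ⟨r, h⟩
  · rintro ⟨r, h⟩
    exact ⟨r, lt_of_lt_of_le (mem_box ht h).1 hkn, h⟩

theorem colSign_false_iff {i : ℕ} :
    colSign n t i 0 = some false ↔ colHas n t (i + 1) 0 ∧ ¬ colHas n t i 0 := by
  unfold colSign
  split_ifs with h1 h2 <;> simp_all

theorem pctr_after_zero (hk : 1 ≤ k) (i : ℕ) :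
    pctr (colWordAfter n (colShape k 0) t i 0) = 0 := by
  rw [colShape_zero hk]
  simp [colWordAfter, pctr]

theorem exists_eBoxCol_iff (hk : 1 ≤ k) (hkn : k ≤ n) (ht : IsSVT n (colShape k) t) {i : ℕ} :
    (∃ c, eBoxCol n (colShape k 0) t i c) ↔
      ((∃ r, (i + 1) ∈ t r 0) ∧ ¬ ∃ r, i ∈ t r 0) := by
  constructor
  · rintro ⟨c, ⟨⟨hc1, hc2, -⟩, -⟩⟩
    have hc0 : c = 0 := by have h2 := colShape_zero (k := k) hk; omega
    subst hc0
    have := colSign_false_iff.mp hc2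
    exact ⟨(colHas_iff hkn ht).mp this.1, fun h => this.2 ((colHas_iff hkn ht).mpr h)⟩
  · rintro ⟨h1, h2⟩
    refine ⟨0, ⟨⟨?_, ?_, pctr_after_zero hk i⟩, fun c' _ => Nat.zero_le _⟩⟩
    · rw [colShape_zero hk]; omega
    · exact colSign_false_iff.mpr ⟨(colHas_iff hkn ht).mpr h1, fun h => h2 ((colHas_iff hkn ht).mp h)⟩

theorem eRaw_none (hk : 1 ≤ k) (hkn : k ≤ n) (ht : IsSVT n (colShape k) t) {i : ℕ}
    (h : ¬((∃ r, (i + 1) ∈ t r 0) ∧ ¬ ∃ r, i ∈ t r 0)) :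
    eRaw n (colShape k) i t = none := by
  unfold eRaw
  rw [dif_neg]
  intro hex
  exact h ((exists_eBoxCol_iff hk hkn ht).mp hex)

theorem eRaw_some (hk : 1 ≤ k) (hkn : k ≤ n) (ht : IsSVT n (colShape k) t) {i r : ℕ}
    (hr : (i + 1) ∈ t r 0) (hni : ¬ ∃ r', i ∈ t r' 0) :
    eRaw n (colShape k) i t = some (updateBox t r 0 (insert i ((t r 0).erase (i + 1)))) := by
  have hex : ∃ c, eBoxCol n (colShape k 0) t i c :=
    (exists_eBoxCol_iff hk hkn ht).mpr ⟨⟨r, hr⟩, hni⟩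
  unfold eRaw
  rw [dif_pos hex]
  have hc0 : Classical.choose hex = 0 := by
    have h1 := (Classical.choose_spec hex).1.1
    have h2 := colShape_zero (k := k) hk
    omega
  simp only [hc0]
  have hrex : ∃ r', r' < n ∧ (i + 1) ∈ t r' 0 :=
    ⟨r, lt_of_lt_of_le (mem_box ht hr).1 hkn, hr⟩
  rw [dif_pos hrex]
  have hre : Classical.choose hrex = r :=
    row_unique ht (Classical.choose_spec hrex).2 hr
  simp only [hre]
  rw [if_neg (by simp)]

theorem eK_none (ht : IsSVT n (colShape k) t) {i : ℕ}
    (h : ¬ ∃ r, i ∈ t r 0 ∧ (i + 1) ∈ t r 0) :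
    eK n (colShape k) i t = none := by
  unfold eK
  rw [dif_neg]
  rintro ⟨p, -, hp2, hpi, hpi1⟩
  have : p.2 = 0 := by have := colShape_le_one k p.1; omega
  rw [this] at hpi hpi1
  exact h ⟨p.1, hpi, hpi1⟩

theorem eK_some (hkn : k ≤ n) (ht : IsSVT n (colShape k) t) {i r : ℕ}
    (h1 : i ∈ t r 0) (h2 : (i + 1) ∈ t r 0) :
    eK n (colShape k) i t = some (updateBox t r 0 ((t r 0).erase (i + 1))) := by
  have hex : ∃ p : ℕ × ℕ, p.1 < n ∧ p.2 < colShape k p.1 ∧ i ∈ t p.1 p.2 ∧ (i + 1) ∈ t p.1 p.2 :=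
    ⟨(r, 0), lt_of_lt_of_le (mem_box ht h1).1 hkn,
      colShape_pos_iff.mpr (mem_box ht h1).1, h1, h2⟩
  unfold eK
  rw [dif_pos hex]
  obtain ⟨-, hs2, hs3, -⟩ := Classical.choose_spec hex
  have hp2 : (Classical.choose hex).2 = 0 := by
    have := colShape_le_one k (Classical.choose hex).1; omega
  rw [hp2] at hs3
  have hp1 : (Classical.choose hex).1 = r := row_unique ht hs3 h1
  simp only [hp1, hp2]

/-! #### Type predicates and local moves -/

def qB (i : ℕ) (t : Filling) : Prop := (∃ r, i ∈ t r 0) ∧ ¬ ∃ r, (i + 1) ∈ t r 0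
def qC (i : ℕ) (t : Filling) : Prop := (∃ r, (i + 1) ∈ t r 0) ∧ ¬ ∃ r, i ∈ t r 0
def qD (i : ℕ) (t : Filling) : Prop := ∃ r, i ∈ t r 0 ∧ (i + 1) ∈ t r 0

noncomputable def lowerT (i : ℕ) (t : Filling) : Filling :=
  updateBox t (rowOf t (i + 1)) 0 (insert i ((t (rowOf t (i + 1)) 0).erase (i + 1)))

noncomputable def raiseT (i : ℕ) (t : Filling) : Filling :=
  updateBox t (rowOf t i) 0 (insert (i + 1) ((t (rowOf t i) 0).erase i))

noncomputable def addDT (i : ℕ) (t : Filling) : Filling :=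
  updateBox t (rowOf t i) 0 (insert (i + 1) (t (rowOf t i) 0))

noncomputable def addIT (i : ℕ) (t : Filling) : Filling :=
  updateBox t (rowOf t (i + 1)) 0 (insert i (t (rowOf t (i + 1)) 0))

noncomputable def eraseDT (i : ℕ) (t : Filling) : Filling :=
  updateBox t (rowOf t i) 0 ((t (rowOf t i) 0).erase (i + 1))

noncomputable def eraseIT (i : ℕ) (t : Filling) : Filling :=
  updateBox t (rowOf t i) 0 ((t (rowOf t i) 0).erase i)

noncomputable def dstep (i : ℕ) (t : Filling) : Filling :=
  if ∃ r, (i + 1) ∈ t r 0 then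
    if ∃ r, i ∈ t r 0 then
      if (i + 1) ∈ t (rowOf t i) 0 then eraseDT i t else t
    else lowerT i t
  else t

theorem mem_update_iff {r : ℕ} {A : Finset ℕ} {a r' : ℕ} :
    a ∈ updateBox t r 0 A r' 0 ↔ (r' = r ∧ a ∈ A) ∨ (r' ≠ r ∧ a ∈ t r' 0) := by
  rw [updateBox_apply0]; split_ifs with h <;> simp [h]

variable {i : ℕ}

theorem dstep_of_qC (hq : qC i t) : dstep i t = lowerT i t := by
  unfold dstep; rw [if_pos hq.1, if_neg hq.2]

theorem dstep_of_qD (ht : IsSVT n (colShape k) t) (hq : qD i t) :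
    dstep i t = eraseDT i t := by
  obtain ⟨r, h1, h2⟩ := hq
  unfold dstep
  rw [if_pos ⟨r, h2⟩, if_pos ⟨r, h1⟩, if_pos (by rw [rowOf_eq ht h1]; exact h2)]

theorem dstep_of_fix (hq : ¬ qC i t) (hq' : ¬ qD i t) : dstep i t = t := by
  unfold dstep
  split_ifs with h1 h2 h3
  · exact absurd ⟨rowOf t i, rowOf_mem h2, h3⟩ hq'
  · rfl
  · exact absurd ⟨h1, h2⟩ hq
  · rfl

/-! #### Preservation of SVT under updates -/

theorem isSVT_updateBox {r : ℕ} {A : Finset ℕ} (ht : IsSVT n (colShape k) t) (hr : r < k)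
    (hne : A.Nonempty) (hb : ∀ a ∈ A, 1 ≤ a ∧ a ≤ n)
    (hup : ∀ b ∈ A, ∀ a ∈ t (r + 1) 0, b < a)
    (hdn : ∀ r', r' + 1 = r → ∀ a ∈ t r' 0, ∀ b ∈ A, a < b) :
    IsSVT n (colShape k) (updateBox t r 0 A) := by
  constructor
  · intro r' c hc
    by_cases h : r' = r ∧ c = 0
    · rw [h.1, h.2, updateBox_same]; exact hne
    · rw [updateBox_ne t A h]; exact ht.boxNonempty r' c hc
  · intro r' c hc
    have hne' : ¬(r' = r ∧ c = 0) := by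
      rintro ⟨rfl, rfl⟩
      exact hc (colShape_pos_iff.mpr hr)
    rw [updateBox_ne t A hne']
    exact ht.emptyOutside r' c hc
  · intro r' c a ha
    by_cases h : r' = r ∧ c = 0
    · rw [h.1, h.2, updateBox_same] at ha; exact hb a ha
    · rw [updateBox_ne t A h] at ha; exact ht.entryBounds r' c a ha
  · intro r' c a b ha hb'
    rw [updateBox_ne t A (by omega)] at hb'
    have hcc : ¬ (c + 1) < colShape k r' := by have := colShape_le_one k r'; omega
    rw [ht.emptyOutside r' (c + 1) hcc] at hb'
    simp at hb'
  · intro r' c a b ha hb'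
    by_cases hc : c = 0
    · subst hc
      by_cases h1 : r' = r
      · subst h1
        rw [updateBox_same] at ha
        rw [updateBox_ne t A (by omega)] at hb'
        exact hup a ha b hb'
      · by_cases h2 : r' + 1 = r
        · rw [updateBox_ne t A (by tauto)] at ha
          rw [show r' + 1 = r from h2, updateBox_same] at hb'
          exact hdn r' h2 a ha b hb'
        · rw [updateBox_ne t A (by tauto)] at ha
          rw [updateBox_ne t A (by tauto)] at hb'
          exact ht.colStrict r' 0 a b ha hb'
    · rw [updateBox_ne t A (by tauto)] at ha
      have hcc : ¬ c < colShape k r' := by have := colShape_le_one k r'; omega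
      rw [ht.emptyOutside r' c hcc] at ha
      simp at ha

theorem svt_lowerT (ht : IsSVT n (colShape k) t) (hi : 1 ≤ i) (hq : qC i t) :
    IsSVT n (colShape k) (lowerT i t) := by
  have hmem : (i + 1) ∈ t (rowOf t (i + 1)) 0 := rowOf_mem hq.1
  have hr1 : rowOf t (i + 1) < k := (mem_box ht hmem).1
  apply isSVT_updateBox ht hr1
  · exact ⟨i, Finset.mem_insert_self i _⟩
  · intro a ha
    rcases Finset.mem_insert.mp ha with hae | ha
    · have h3 := (ht.entryBounds _ _ _ hmem).2
      exact ⟨by omega, by omega⟩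
    · exact ht.entryBounds _ _ _ (Finset.mem_of_mem_erase ha)
  · intro b hb a ha
    rcases Finset.mem_insert.mp hb with hbe | hb
    · have := ht.colStrict _ 0 (i + 1) a hmem ha; omega
    · exact ht.colStrict _ 0 b a (Finset.mem_of_mem_erase hb) ha
  · intro r' hr' a ha b hb
    rcases Finset.mem_insert.mp hb with hbe | hb
    · have h1 : a < i + 1 := ht.colStrict r' 0 a (i + 1) ha (by rw [hr']; exact hmem)
      have h2 : a ≠ i := fun h => hq.2 ⟨r', h ▸ ha⟩
      omega
    · exact ht.colStrict r' 0 a b ha (by rw [hr']; exact Finset.mem_of_mem_erase hb)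

theorem svt_raiseT (ht : IsSVT n (colShape k) t) (hin : i < n) (hq : qB i t) :
    IsSVT n (colShape k) (raiseT i t) := by
  have hmem : i ∈ t (rowOf t i) 0 := rowOf_mem hq.1
  have hr1 : rowOf t i < k := (mem_box ht hmem).1
  apply isSVT_updateBox ht hr1
  · exact ⟨i + 1, Finset.mem_insert_self _ _⟩
  · intro a ha
    rcases Finset.mem_insert.mp ha with hae | ha
    · exact ⟨by omega, by omega⟩
    · exact ht.entryBounds _ _ _ (Finset.mem_of_mem_erase ha)
  · intro b hb a ha
    rcases Finset.mem_insert.mp hb with hbe | hb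
    · have h1 := ht.colStrict _ 0 i a hmem ha
      have h2 : a ≠ i + 1 := fun h => hq.2 ⟨_, h ▸ ha⟩
      omega
    · exact ht.colStrict _ 0 b a (Finset.mem_of_mem_erase hb) ha
  · intro r' hr' a ha b hb
    rcases Finset.mem_insert.mp hb with hbe | hb
    · have h1 : a < i := ht.colStrict r' 0 a i ha (by rw [hr']; exact hmem)
      omega
    · exact ht.colStrict r' 0 a b ha (by rw [hr']; exact Finset.mem_of_mem_erase hb)

theorem svt_addDT (ht : IsSVT n (colShape k) t) (hin : i < n) (hq : qB i t) :
    IsSVT n (colShape k) (addDT i t) := by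
  have hmem : i ∈ t (rowOf t i) 0 := rowOf_mem hq.1
  have hr1 : rowOf t i < k := (mem_box ht hmem).1
  apply isSVT_updateBox ht hr1
  · exact ⟨i + 1, Finset.mem_insert_self _ _⟩
  · intro a ha
    rcases Finset.mem_insert.mp ha with hae | ha
    · exact ⟨by omega, by omega⟩
    · exact ht.entryBounds _ _ _ ha
  · intro b hb a ha
    rcases Finset.mem_insert.mp hb with hbe | hb
    · have h1 := ht.colStrict _ 0 i a hmem ha
      have h2 : a ≠ i + 1 := fun h => hq.2 ⟨_, h ▸ ha⟩
      omega
    · exact ht.colStrict _ 0 b a hb ha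
  · intro r' hr' a ha b hb
    rcases Finset.mem_insert.mp hb with hbe | hb
    · have h1 : a < i := ht.colStrict r' 0 a i ha (by rw [hr']; exact hmem)
      omega
    · exact ht.colStrict r' 0 a b ha (by rw [hr']; exact hb)

theorem svt_addIT (ht : IsSVT n (colShape k) t) (hi : 1 ≤ i) (hq : qC i t) :
    IsSVT n (colShape k) (addIT i t) := by
  have hmem : (i + 1) ∈ t (rowOf t (i + 1)) 0 := rowOf_mem hq.1
  have hr1 : rowOf t (i + 1) < k := (mem_box ht hmem).1
  apply isSVT_updateBox ht hr1
  · exact ⟨i, Finset.mem_insert_self _ _⟩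
  · intro a ha
    rcases Finset.mem_insert.mp ha with hae | ha
    · have h3 := (ht.entryBounds _ _ _ hmem).2
      exact ⟨by omega, by omega⟩
    · exact ht.entryBounds _ _ _ ha
  · intro b hb a ha
    rcases Finset.mem_insert.mp hb with hbe | hb
    · have := ht.colStrict _ 0 (i + 1) a hmem ha; omega
    · exact ht.colStrict _ 0 b a hb ha
  · intro r' hr' a ha b hb
    rcases Finset.mem_insert.mp hb with hbe | hb
    · have h1 : a < i + 1 := ht.colStrict r' 0 a (i + 1) ha (by rw [hr']; exact hmem)
      have h2 : a ≠ i := fun h => hq.2 ⟨r', h ▸ ha⟩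
      omega
    · exact ht.colStrict r' 0 a b ha (by rw [hr']; exact hb)

theorem svt_eraseDT (ht : IsSVT n (colShape k) t) (hq : qD i t) :
    IsSVT n (colShape k) (eraseDT i t) := by
  obtain ⟨r, h1, h2⟩ := hq
  have hro : rowOf t i = r := rowOf_eq ht h1
  have hr1 : rowOf t i < k := by rw [hro]; exact (mem_box ht h1).1
  apply isSVT_updateBox ht hr1
  · exact ⟨i, Finset.mem_erase.mpr ⟨by omega, by rw [hro]; exact h1⟩⟩
  · exact fun a ha => ht.entryBounds _ _ _ (Finset.mem_of_mem_erase ha)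
  · exact fun b hb a ha => ht.colStrict _ 0 b a (Finset.mem_of_mem_erase hb) ha
  · exact fun r' hr' a ha b hb =>
      ht.colStrict r' 0 a b ha (by rw [hr']; exact Finset.mem_of_mem_erase hb)

theorem svt_eraseIT (ht : IsSVT n (colShape k) t) (hq : qD i t) :
    IsSVT n (colShape k) (eraseIT i t) := by
  obtain ⟨r, h1, h2⟩ := hq
  have hro : rowOf t i = r := rowOf_eq ht h1
  have hr1 : rowOf t i < k := by rw [hro]; exact (mem_box ht h1).1
  apply isSVT_updateBox ht hr1
  · exact ⟨i + 1, Finset.mem_erase.mpr ⟨by omega, by rw [hro]; exact h2⟩⟩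
  · exact fun a ha => ht.entryBounds _ _ _ (Finset.mem_of_mem_erase ha)
  · exact fun b hb a ha => ht.colStrict _ 0 b a (Finset.mem_of_mem_erase hb) ha
  · exact fun r' hr' a ha b hb =>
      ht.colStrict r' 0 a b ha (by rw [hr']; exact Finset.mem_of_mem_erase hb)

theorem svt_dstep (ht : IsSVT n (colShape k) t) (hi : 1 ≤ i) :
    IsSVT n (colShape k) (dstep i t) := by
  by_cases hqC : qC i t
  · rw [dstep_of_qC hqC]; exact svt_lowerT ht hi hqC
  · by_cases hqD : qD i t
    · rw [dstep_of_qD ht hqD]; exact svt_eraseDT ht hqD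
    · rw [dstep_of_fix hqC hqD]; exact ht

/-! #### Types of images and round trips -/

theorem qB_lowerT (ht : IsSVT n (colShape k) t) (hq : qC i t) : qB i (lowerT i t) := by
  have hmem : (i + 1) ∈ t (rowOf t (i + 1)) 0 := rowOf_mem hq.1
  constructor
  · exact ⟨rowOf t (i + 1), by rw [lowerT, updateBox_same]; exact Finset.mem_insert_self _ _⟩
  · rintro ⟨r, hr⟩
    rcases mem_update_iff.mp hr with ⟨-, h⟩ | ⟨hne, h⟩
    · rcases Finset.mem_insert.mp h with h | h
      · omega
      · exact absurd rfl (Finset.ne_of_mem_erase h)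
    · exact hne (row_unique ht h hmem)

theorem qC_raiseT (ht : IsSVT n (colShape k) t) (hq : qB i t) : qC i (raiseT i t) := by
  have hmem : i ∈ t (rowOf t i) 0 := rowOf_mem hq.1
  constructor
  · exact ⟨rowOf t i, by rw [raiseT, updateBox_same]; exact Finset.mem_insert_self _ _⟩
  · rintro ⟨r, hr⟩
    rcases mem_update_iff.mp hr with ⟨-, h⟩ | ⟨hne, h⟩
    · rcases Finset.mem_insert.mp h with h | h
      · omega
      · exact absurd rfl (Finset.ne_of_mem_erase h)
    · exact hne (row_unique ht h hmem)

theorem qD_addDT (hq : qB i t) : qD i (addDT i t) := by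
  have hmem : i ∈ t (rowOf t i) 0 := rowOf_mem hq.1
  refine ⟨rowOf t i, ?_, ?_⟩
  · rw [addDT, updateBox_same]; exact Finset.mem_insert_of_mem hmem
  · rw [addDT, updateBox_same]; exact Finset.mem_insert_self _ _

theorem qD_addIT (hq : qC i t) : qD i (addIT i t) := by
  have hmem : (i + 1) ∈ t (rowOf t (i + 1)) 0 := rowOf_mem hq.1
  refine ⟨rowOf t (i + 1), ?_, ?_⟩
  · rw [addIT, updateBox_same]; exact Finset.mem_insert_self _ _
  · rw [addIT, updateBox_same]; exact Finset.mem_insert_of_mem hmem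

theorem qB_eraseDT (ht : IsSVT n (colShape k) t) (hq : qD i t) : qB i (eraseDT i t) := by
  obtain ⟨r, h1, h2⟩ := hq
  have hro : rowOf t i = r := rowOf_eq ht h1
  constructor
  · refine ⟨rowOf t i, ?_⟩
    rw [eraseDT, updateBox_same]
    exact Finset.mem_erase.mpr ⟨by omega, by rw [hro]; exact h1⟩
  · rintro ⟨r', hr'⟩
    rcases mem_update_iff.mp hr' with ⟨-, h⟩ | ⟨hne, h⟩
    · exact absurd rfl (Finset.ne_of_mem_erase h)
    · rw [hro] at hne
      exact hne (row_unique ht h h2)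

theorem qC_eraseIT (ht : IsSVT n (colShape k) t) (hq : qD i t) : qC i (eraseIT i t) := by
  obtain ⟨r, h1, h2⟩ := hq
  have hro : rowOf t i = r := rowOf_eq ht h1
  constructor
  · refine ⟨rowOf t i, ?_⟩
    rw [eraseIT, updateBox_same]
    exact Finset.mem_erase.mpr ⟨by omega, by rw [hro]; exact h2⟩
  · rintro ⟨r', hr'⟩
    rcases mem_update_iff.mp hr' with ⟨-, h⟩ | ⟨hne, h⟩
    · exact absurd rfl (Finset.ne_of_mem_erase h)
    · rw [hro] at hne
      exact hne (row_unique ht h h1)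

theorem rowOf_update_eq {r : ℕ} {A : Finset ℕ} {a : ℕ}
    (hsvt : IsSVT n (colShape k) (updateBox t r 0 A)) (ha : a ∈ A) :
    rowOf (updateBox t r 0 A) a = r :=
  rowOf_eq hsvt (by rw [updateBox_same]; exact ha)

theorem rt_dstep_raiseT (ht : IsSVT n (colShape k) t) (hin : i < n) (hq : qB i t) :
    dstep i (raiseT i t) = t := by
  have hmem : i ∈ t (rowOf t i) 0 := rowOf_mem hq.1
  have hsvt := svt_raiseT ht hin hq
  have hqc := qC_raiseT ht hq
  rw [dstep_of_qC hqc]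
  unfold lowerT
  rw [show rowOf (raiseT i t) (i + 1) = rowOf t i from
    rowOf_update_eq hsvt (Finset.mem_insert_self _ _)]
  unfold raiseT
  rw [updateBox_same, updateBox_updateBox,
    Finset.erase_insert (fun h => hq.2 ⟨rowOf t i, Finset.mem_of_mem_erase h⟩),
    Finset.insert_erase hmem, updateBox_self]

theorem rt_raiseT_dstep (ht : IsSVT n (colShape k) t) (hi : 1 ≤ i) (hq : qC i t) :
    raiseT i (dstep i t) = t := by
  have hmem : (i + 1) ∈ t (rowOf t (i + 1)) 0 := rowOf_mem hq.1
  have hsvt := svt_lowerT ht hi hq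
  rw [dstep_of_qC hq]
  unfold raiseT
  rw [show rowOf (lowerT i t) i = rowOf t (i + 1) from
    rowOf_update_eq hsvt (Finset.mem_insert_self _ _)]
  unfold lowerT
  rw [updateBox_same, updateBox_updateBox,
    Finset.erase_insert (fun h => hq.2 ⟨rowOf t (i + 1), Finset.mem_of_mem_erase h⟩),
    Finset.insert_erase hmem, updateBox_self]

theorem rt_dstep_addDT (ht : IsSVT n (colShape k) t) (hin : i < n) (hq : qB i t) :
    dstep i (addDT i t) = t := by
  have hmem : i ∈ t (rowOf t i) 0 := rowOf_mem hq.1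
  have hsvt := svt_addDT ht hin hq
  have hqd := qD_addDT hq
  rw [dstep_of_qD hsvt hqd]
  unfold eraseDT
  rw [show rowOf (addDT i t) i = rowOf t i from
    rowOf_update_eq hsvt (Finset.mem_insert_of_mem hmem)]
  unfold addDT
  rw [updateBox_same, updateBox_updateBox,
    Finset.erase_insert (fun h => hq.2 ⟨rowOf t i, h⟩), updateBox_self]

theorem rt_addDT_dstep (ht : IsSVT n (colShape k) t) (hq : qD i t) :
    addDT i (dstep i t) = t := by
  obtain ⟨r, h1, h2⟩ := hq
  have hro : rowOf t i = r := rowOf_eq ht h1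
  have hsvt := svt_eraseDT ht ⟨r, h1, h2⟩
  rw [dstep_of_qD ht ⟨r, h1, h2⟩]
  unfold addDT
  rw [show rowOf (eraseDT i t) i = rowOf t i from
    rowOf_update_eq hsvt (Finset.mem_erase.mpr ⟨by omega, by rw [hro]; exact h1⟩)]
  unfold eraseDT
  rw [updateBox_same, updateBox_updateBox,
    Finset.insert_erase (by rw [hro]; exact h2), updateBox_self]

theorem rt_eraseIT_addIT (ht : IsSVT n (colShape k) t) (hi : 1 ≤ i) (hq : qC i t) :
    eraseIT i (addIT i t) = t := by
  have hmem : (i + 1) ∈ t (rowOf t (i + 1)) 0 := rowOf_mem hq.1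
  have hsvt := svt_addIT ht hi hq
  unfold eraseIT
  rw [show rowOf (addIT i t) i = rowOf t (i + 1) from
    rowOf_update_eq hsvt (Finset.mem_insert_self _ _)]
  unfold addIT
  rw [updateBox_same, updateBox_updateBox,
    Finset.erase_insert (fun h => hq.2 ⟨rowOf t (i + 1), h⟩), updateBox_self]

theorem rt_addIT_eraseIT (ht : IsSVT n (colShape k) t) (hq : qD i t) :
    addIT i (eraseIT i t) = t := by
  obtain ⟨r, h1, h2⟩ := hq
  have hro : rowOf t i = r := rowOf_eq ht h1
  have hsvt := svt_eraseIT ht ⟨r, h1, h2⟩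
  unfold addIT
  rw [show rowOf (eraseIT i t) (i + 1) = rowOf t i from
    rowOf_update_eq hsvt (Finset.mem_erase.mpr ⟨by omega, by rw [hro]; exact h2⟩)]
  unfold eraseIT
  rw [updateBox_same, updateBox_updateBox,
    Finset.insert_erase (by rw [hro]; exact h1), updateBox_self]

/-! #### The Demazure step computes `dstep` -/

theorem demStep_iff (hk : 1 ≤ k) (hkn : k ≤ n) (ht : IsSVT n (colShape k) t)
    (hi : 1 ≤ i) (hin : i < n) {t' : Filling} :
    DemStep n (colShape k) (eK n (colShape k)) i t t' ↔ t' = dstep i t := by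
  by_cases hqC : qC i t
  · -- e applies once, eK does not apply
    have hmem : (i + 1) ∈ t (rowOf t (i + 1)) 0 := rowOf_mem hqC.1
    have hsvt := svt_lowerT ht hi hqC
    have he1 : eRaw n (colShape k) i t = some (lowerT i t) :=
      eRaw_some hk hkn ht hmem hqC.2
    have hqB := qB_lowerT ht hqC
    have he2 : eRaw n (colShape k) i (lowerT i t) = none :=
      eRaw_none hk hkn hsvt (fun hcon => hqB.2 hcon.1)
    have hek : eK n (colShape k) i (lowerT i t) = none := by
      apply eK_none hsvt
      rintro ⟨r, -, h2⟩
      exact hqB.2 ⟨r, h2⟩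
    constructor
    · rintro ⟨t1, hm1, hm2⟩
      have ht1 : t1 = lowerT i t := (maxApply_of_one he1 he2).mp hm1
      subst ht1
      have := (maxApply_of_none hek).mp hm2
      rw [this, dstep_of_qC hqC]
    · rintro rfl
      rw [dstep_of_qC hqC]
      exact ⟨lowerT i t, (maxApply_of_one he1 he2).mpr rfl, (maxApply_of_none hek).mpr rfl⟩
  · by_cases hqD : qD i t
    · obtain ⟨r, h1, h2⟩ := hqD
      have hro : rowOf t i = r := rowOf_eq ht h1
      have he1 : eRaw n (colShape k) i t = none :=
        eRaw_none hk hkn ht (by push_neg; intro _; exact ⟨r, h1⟩)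
      have hsvt := svt_eraseDT ht ⟨r, h1, h2⟩
      have hqB := qB_eraseDT ht ⟨r, h1, h2⟩
      have hek1 : eK n (colShape k) i t = some (eraseDT i t) := by
        rw [eraseDT, hro]
        exact eK_some hkn ht h1 h2
      have hek2 : eK n (colShape k) i (eraseDT i t) = none := by
        apply eK_none hsvt
        rintro ⟨r', -, h2'⟩
        exact hqB.2 ⟨r', h2'⟩
      constructor
      · rintro ⟨t1, hm1, hm2⟩
        have ht1 : t1 = t := (maxApply_of_none he1).mp hm1
        subst ht1
        have := (maxApply_of_one hek1 hek2).mp hm2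
        rw [this, dstep_of_qD ht ⟨r, h1, h2⟩]
      · rintro rfl
        rw [dstep_of_qD ht ⟨r, h1, h2⟩]
        exact ⟨t, (maxApply_of_none he1).mpr rfl, (maxApply_of_one hek1 hek2).mpr rfl⟩
    · have he1 : eRaw n (colShape k) i t = none := by
        apply eRaw_none hk hkn ht
        rintro ⟨hhas, hnot⟩
        exact hqC ⟨hhas, hnot⟩
      have hek : eK n (colShape k) i t = none := by
        apply eK_none ht
        rintro ⟨r, h1, h2⟩
        exact hqD ⟨r, h1, h2⟩
      constructor
      · rintro ⟨t1, hm1, hm2⟩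
        have ht1 : t1 = t := (maxApply_of_none he1).mp hm1
        subst ht1
        have := (maxApply_of_none hek).mp hm2
        rw [this, dstep_of_fix hqC hqD]
      · rintro rfl
        rw [dstep_of_fix hqC hqD]
        exact ⟨t, (maxApply_of_none he1).mpr rfl, (maxApply_of_none hek).mpr rfl⟩

theorem kdem_cons (hk : 1 ≤ k) (hkn : k ≤ n) (hi : 1 ≤ i) (hin : i < n) (word : List ℕ) :
    KDem n (colShape k) (eK n (colShape k)) (i :: word) =
      {t : Filling | IsSVT n (colShape k) t ∧
        dstep i t ∈ KDem n (colShape k) (eK n (colShape k)) word} := by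
  ext t
  simp only [KDem, Set.mem_setOf_eq, DemReach]
  constructor
  · rintro ⟨hsvt, t2, hstep, hreach⟩
    have h2 := (demStep_iff hk hkn hsvt hi hin).mp hstep
    subst h2
    exact ⟨hsvt, svt_dstep hsvt hi, hreach⟩
  · rintro ⟨hsvt, -, hreach⟩
    exact ⟨hsvt, dstep i t, (demStep_iff hk hkn hsvt hi hin).mpr rfl, hreach⟩

/-! #### Bounded families of columns -/

/-- Column tableaux whose row-`r` entries are bounded by `m r`. -/
def Dset (n k : ℕ) (m : ℕ → ℕ) : Set Filling :=
  {t : Filling | IsSVT n (colShape k) t ∧ ∀ r < k, ∀ a ∈ t r 0, a ≤ m r}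

/-- The effect of one Demazure step on the bound function. -/
def bump (k i : ℕ) (m : ℕ → ℕ) : ℕ → ℕ :=
  fun r => if r < k ∧ m r = i ∧ ∀ r' < k, m r' ≠ i + 1 then i + 1 else m r

theorem bump_ge (k i : ℕ) (m : ℕ → ℕ) (r : ℕ) : m r ≤ bump k i m r := by
  unfold bump
  split_ifs with h
  · obtain ⟨-, h2, -⟩ := h; omega
  · exact le_rfl

theorem bump_cases (k i : ℕ) (m : ℕ → ℕ) (r : ℕ) :
    bump k i m r = m r ∨
      (r < k ∧ m r = i ∧ (∀ r' < k, m r' ≠ i + 1) ∧ bump k i m r = i + 1) := by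
  unfold bump
  split_ifs with h
  · exact Or.inr ⟨h.1, h.2.1, h.2.2, rfl⟩
  · exact Or.inl rfl

theorem mono_lt {m : ℕ → ℕ} (hmono : ∀ r, r + 1 < k → m r < m (r + 1)) :
    ∀ r r', r < r' → r' < k → m r < m r' := by
  intro r r'
  induction r' with
  | zero => omega
  | succ r'' ih =>
    intro h hk'
    rcases Nat.lt_succ_iff_lt_or_eq.mp h with h' | h'
    · exact lt_trans (ih h' (by omega)) (hmono r'' hk')
    · subst h'; exact hmono r hk'

theorem bump_mono {m : ℕ → ℕ} (hmono : ∀ r, r + 1 < k → m r < m (r + 1)) (i : ℕ) :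
    ∀ r, r + 1 < k → bump k i m r < bump k i m (r + 1) := by
  intro r hr
  unfold bump
  split_ifs with h1 h2 h2
  · obtain ⟨-, ha, -⟩ := h1
    obtain ⟨-, hb, -⟩ := h2
    have := hmono r hr
    omega
  · obtain ⟨-, ha, hc⟩ := h1
    have h3 := hmono r hr
    have h4 := hc (r + 1) hr
    omega
  · obtain ⟨-, hb, -⟩ := h2
    have := hmono r hr
    omega
  · exact hmono r hr

theorem no_key_contra (ht : IsSVT n (colShape k) t) {m : ℕ → ℕ}
    (hmono : ∀ r, r + 1 < k → m r < m (r + 1)) {r1 : ℕ} (hr1 : r1 < k)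
    (hmem : (i + 1) ∈ t r1 0) (hm1 : m r1 = i)
    (h2 : ∃ r2, r2 < k ∧ m r2 = i + 1)
    (hb : r1 + 1 < k → ∀ b ∈ t (r1 + 1) 0, b ≤ m (r1 + 1)) : False := by
  obtain ⟨r2, hr2k, hm2⟩ := h2
  have hgt : r1 < r2 := by
    rcases lt_trichotomy r1 r2 with h | h | h
    · exact h
    · rw [h] at hm1; omega
    · have := mono_lt hmono r2 r1 h hr1; omega
  have hr1k : r1 + 1 < k := by omega
  have hmid : m (r1 + 1) = i + 1 := by
    have ha := hmono r1 hr1k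
    have hbb : m (r1 + 1) ≤ m r2 := by
      rcases Nat.lt_or_ge (r1 + 1) r2 with h | h
      · exact le_of_lt (mono_lt hmono (r1 + 1) r2 h hr2k)
      · have : r1 + 1 = r2 := by omega
        rw [this]
    omega
  obtain ⟨b, hbmem⟩ := ht.boxNonempty (r1 + 1) 0 (colShape_pos_iff.mpr hr1k)
  have hb1 : i + 1 < b := ht.colStrict r1 0 (i + 1) b hmem hbmem
  have hb2 : b ≤ m (r1 + 1) := hb hr1k b hbmem
  omega

theorem dstep_preimage (hk : 1 ≤ k) (hkn : k ≤ n) (hi : 1 ≤ i) (hin : i < n)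
    {m : ℕ → ℕ} (hmono : ∀ r, r + 1 < k → m r < m (r + 1)) :
    {t : Filling | IsSVT n (colShape k) t ∧ dstep i t ∈ Dset n k m} =
      Dset n k (bump k i m) := by
  ext t
  simp only [Set.mem_setOf_eq, Dset]
  constructor
  · rintro ⟨hsvt, -, hbound⟩
    refine ⟨hsvt, ?_⟩
    intro r hrk a ha
    by_cases hqC : qC i t
    · have hmem : (i + 1) ∈ t (rowOf t (i + 1)) 0 := rowOf_mem hqC.1
      rw [dstep_of_qC hqC] at hbound
      by_cases hr : r = rowOf t (i + 1)
      · have hmem' : (i + 1) ∈ t r 0 := by rw [hr]; exact hmem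
        by_cases hai : a = i + 1
        · have hmemi : i ∈ lowerT i t r 0 := by
            rw [lowerT]
            exact mem_update_iff.mpr (Or.inl ⟨hr, Finset.mem_insert_self _ _⟩)
          have hile : i ≤ m r := hbound r hrk i hmemi
          have hbge := bump_ge k i m r
          rcases Nat.lt_or_ge i (m r) with hlt | hge
          · omega
          · have hmr : m r = i := by omega
            have hcond : ∀ r' < k, m r' ≠ i + 1 := by
              intro r' hr'k hne
              refine no_key_contra hsvt hmono hrk hmem' hmr ⟨r', hr'k, hne⟩ ?_
              intro hlt' b hbmem
              refine hbound (r + 1) hlt' b ?_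
              rw [lowerT]
              exact mem_update_iff.mpr (Or.inr ⟨by omega, hbmem⟩)
            have hbv : bump k i m r = i + 1 := by
              unfold bump; rw [if_pos ⟨hrk, hmr, hcond⟩]
            omega
        · have hmemA : a ∈ lowerT i t r 0 := by
            rw [lowerT]
            exact mem_update_iff.mpr
              (Or.inl ⟨hr, Finset.mem_insert_of_mem
                (Finset.mem_erase.mpr ⟨hai, by rw [← hr]; exact ha⟩)⟩)
          exact le_trans (hbound r hrk a hmemA) (bump_ge k i m r)
      · have hmemA : a ∈ lowerT i t r 0 := mem_update_iff.mpr (Or.inr ⟨hr, ha⟩)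
        exact le_trans (hbound r hrk a hmemA) (bump_ge k i m r)
    · by_cases hqD : qD i t
      · have hmemi0 : i ∈ t (rowOf t i) 0 := rowOf_mem ⟨hqD.choose, hqD.choose_spec.1⟩
        have hmem : (i + 1) ∈ t (rowOf t i) 0 := by
          have hro : rowOf t i = hqD.choose := rowOf_eq hsvt hqD.choose_spec.1
          rw [hro]; exact hqD.choose_spec.2
        rw [dstep_of_qD hsvt hqD] at hbound
        by_cases hr : r = rowOf t i
        · have hmem' : (i + 1) ∈ t r 0 := by rw [hr]; exact hmem
          by_cases hai : a = i + 1
          · have hmemi : i ∈ eraseDT i t r 0 := by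
              rw [eraseDT]
              exact mem_update_iff.mpr
                (Or.inl ⟨hr, Finset.mem_erase.mpr ⟨by omega, hmemi0⟩⟩)
            have hile : i ≤ m r := hbound r hrk i hmemi
            have hbge := bump_ge k i m r
            rcases Nat.lt_or_ge i (m r) with hlt | hge
            · omega
            · have hmr : m r = i := by omega
              have hcond : ∀ r' < k, m r' ≠ i + 1 := by
                intro r' hr'k hne
                refine no_key_contra hsvt hmono hrk hmem' hmr ⟨r', hr'k, hne⟩ ?_
                intro hlt' b hbmem
                refine hbound (r + 1) hlt' b ?_
                rw [eraseDT]
                exact mem_update_iff.mpr (Or.inr ⟨by omega, hbmem⟩)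
              have hbv : bump k i m r = i + 1 := by
                unfold bump; rw [if_pos ⟨hrk, hmr, hcond⟩]
              omega
          · have hmemA : a ∈ eraseDT i t r 0 := by
              rw [eraseDT]
              exact mem_update_iff.mpr
                (Or.inl ⟨hr, Finset.mem_erase.mpr ⟨hai, by rw [← hr]; exact ha⟩⟩)
            exact le_trans (hbound r hrk a hmemA) (bump_ge k i m r)
        · have hmemA : a ∈ eraseDT i t r 0 := mem_update_iff.mpr (Or.inr ⟨hr, ha⟩)
          exact le_trans (hbound r hrk a hmemA) (bump_ge k i m r)
      · rw [dstep_of_fix hqC hqD] at hbound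
        exact le_trans (hbound r hrk a ha) (bump_ge k i m r)
  · rintro ⟨hsvt, hbound⟩
    refine ⟨hsvt, svt_dstep hsvt hi, ?_⟩
    intro r hrk a ha
    have hstar : ∀ r' < k, ∀ a' ∈ t r' 0, a' ≠ i + 1 → a' ≤ m r' := by
      intro r' hr' a' ha' hne
      have hb := hbound r' hr' a' ha'
      rcases bump_cases k i m r' with hcase | ⟨-, hmr, -, hbv⟩
      · omega
      · omega
    by_cases hqC : qC i t
    · rw [dstep_of_qC hqC] at ha
      rcases mem_update_iff.mp ha with ⟨hre, hmemA⟩ | ⟨hrne, hmem⟩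
      · rcases Finset.mem_insert.mp hmemA with hae | hmemE
        · have h1 : (i + 1) ∈ t r 0 := by rw [hre]; exact rowOf_mem hqC.1
          have h2 := hbound r hrk (i + 1) h1
          rcases bump_cases k i m r with hcase | ⟨-, hmr, -, hbv⟩ <;> omega
        · have hmm : a ∈ t r 0 := by rw [hre]; exact Finset.mem_of_mem_erase hmemE
          exact hstar r hrk a hmm (Finset.ne_of_mem_erase hmemE)
      · have hne : a ≠ i + 1 := by
          intro hae
          exact hrne (row_unique hsvt (hae ▸ hmem) (rowOf_mem hqC.1))
        exact hstar r hrk a hmem hne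
    · by_cases hqD : qD i t
      · rw [dstep_of_qD hsvt hqD] at ha
        rcases mem_update_iff.mp ha with ⟨hre, hmemA⟩ | ⟨hrne, hmem⟩
        · refine hstar r hrk a ?_ (Finset.ne_of_mem_erase hmemA)
          rw [hre]; exact Finset.mem_of_mem_erase hmemA
        · have hne : a ≠ i + 1 := by
            intro hae
            obtain ⟨r0, h0, h1⟩ := hqD
            have hro : rowOf t i = r0 := rowOf_eq hsvt h0
            apply hrne
            rw [hro]
            exact row_unique hsvt (hae ▸ hmem) h1
          exact hstar r hrk a hmem hne
      · rw [dstep_of_fix hqC hqD] at ha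
        by_cases hne : a = i + 1
        · subst hne
          obtain ⟨r2, h2⟩ : ∃ r2, i ∈ t r2 0 := by
            by_contra hno
            exact hqC ⟨⟨r, ha⟩, hno⟩
          have hr2r : r2 ≠ r := fun h => hqD ⟨r, h ▸ h2, ha⟩
          have hr2lt : r2 < r := by
            rcases lt_or_gt_of_ne hr2r with h | h
            · exact h
            · have := entry_lt hsvt ha r2 h i h2
              omega
          have hbnd2 := hbound r2 (by omega) i h2
          have hbnd := hbound r hrk (i + 1) ha
          rcases bump_cases k i m r with hcase | ⟨-, hmr, -, hbv⟩
          · omega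
          · have hmlt : m r2 < m r := mono_lt hmono r2 r hr2lt hrk
            rcases bump_cases k i m r2 with hcase2 | ⟨-, hmr2, -, -⟩
            · omega
            · omega
        · exact hstar r hrk a ha hne

/-! #### Finiteness -/

theorem svt_finite : {t : Filling | IsSVT n (colShape k) t}.Finite := by
  apply Set.Finite.of_finite_image (f := fun t =>
    (Finset.range k ×ˢ Finset.range (n + 1)).filter (fun p => p.2 ∈ t p.1 0))
  · apply Set.Finite.subset
      (Finset.finite_toSet ((Finset.range k ×ˢ Finset.range (n + 1)).powerset))
    rintro F ⟨t, -, rfl⟩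
    simp only [Finset.coe_powerset, Set.mem_preimage, Set.mem_powerset_iff,
      Finset.coe_subset]
    exact Finset.filter_subset _ _
  · intro t1 h1 t2 h2 heq
    simp only [Set.mem_setOf_eq] at h1 h2
    dsimp only at heq
    funext r c
    by_cases hrc : r < k ∧ c = 0
    · obtain ⟨hrk, rfl⟩ := hrc
      ext a
      constructor
      · intro ha
        have han : a < n + 1 := by have := (h1.entryBounds r 0 a ha).2; omega
        have hmem : (r, a) ∈ (Finset.range k ×ˢ Finset.range (n + 1)).filter
            (fun p => p.2 ∈ t1 p.1 0) := by
          simp only [Finset.mem_filter, Finset.mem_product, Finset.mem_range]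
          exact ⟨⟨hrk, han⟩, ha⟩
        rw [heq] at hmem
        exact (Finset.mem_filter.mp hmem).2
      · intro ha
        have han : a < n + 1 := by have := (h2.entryBounds r 0 a ha).2; omega
        have hmem : (r, a) ∈ (Finset.range k ×ˢ Finset.range (n + 1)).filter
            (fun p => p.2 ∈ t2 p.1 0) := by
          simp only [Finset.mem_filter, Finset.mem_product, Finset.mem_range]
          exact ⟨⟨hrk, han⟩, ha⟩
        rw [← heq] at hmem
        exact (Finset.mem_filter.mp hmem).2
    · have hout : ¬ c < colShape k r := by
        unfold colShape; split <;> omega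
      rw [h1.emptyOutside r c hout, h2.emptyOutside r c hout]

theorem dset_finite (m : ℕ → ℕ) : (Dset n k m).Finite :=
  svt_finite.subset fun _ ht => ht.1

/-! #### Monomials of tableaux -/

/-- The monomial attached to a tableau. -/
noncomputable def mon (n k : ℕ) (t : Filling) : KPoly :=
  betaP ^ excess n (colShape k) t * xwt n (colShape k) t

theorem charSet_eq {S : Set Filling} (hS : S.Finite) :
    charSet n (colShape k) S = ∑ t ∈ hS.toFinset, mon n k t := by
  rw [charSet]
  conv_lhs => rw [← Set.Finite.coe_toFinset hS]
  exact finsum_mem_coe_finset _ _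

theorem wt_eq_ite (hk : 1 ≤ k) (hkn : k ≤ n) (ht : IsSVT n (colShape k) t) (j : ℕ) :
    wt n (colShape k) t j = if ∃ r, j ∈ t r 0 then 1 else 0 := by
  unfold wt
  split_ifs with h
  · obtain ⟨r, hr⟩ := h
    rw [Finset.card_eq_one]
    refine ⟨(r, 0), ?_⟩
    ext p
    rcases p with ⟨p1, p2⟩
    simp only [Finset.mem_filter, Finset.mem_product, Finset.mem_range, Finset.mem_singleton]
    constructor
    · rintro ⟨⟨-, -⟩, hmem⟩
      have hbox := mem_box ht hmem
      have hp2 : p2 = 0 := hbox.2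
      subst hp2
      have hp1 : p1 = r := row_unique ht hmem hr
      rw [hp1]
    · rintro heq
      rw [Prod.ext_iff] at heq
      obtain ⟨h1', h2'⟩ := heq
      dsimp at h1' h2'
      subst h1'; subst h2'
      refine ⟨⟨lt_of_lt_of_le (mem_box ht hr).1 hkn, ?_⟩, hr⟩
      rw [colShape_zero hk]; omega
  · rw [Finset.card_eq_zero, Finset.filter_eq_empty_iff]
    rintro p -
    intro hmem
    have hbox := mem_box ht hmem
    apply h
    refine ⟨p.1, ?_⟩
    rw [← hbox.2]; exact hmem

theorem excess_update_card {r : ℕ} {A : Finset ℕ} (h : A.card = (t r 0).card) :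
    excess n (colShape k) (updateBox t r 0 A) = excess n (colShape k) t := by
  unfold excess
  refine Finset.sum_congr rfl fun p hp => ?_
  unfold updateBox
  split_ifs with hpe
  · rw [hpe.1, hpe.2, h]
  · rfl

theorem excess_update_insert (hk : 1 ≤ k) (hkn : k ≤ n) (ht : IsSVT n (colShape k) t)
    {r x : ℕ} (hrk : r < k) (hx : x ∉ t r 0) :
    excess n (colShape k) (updateBox t r 0 (insert x (t r 0)))
      = excess n (colShape k) t + 1 := by
  unfold excess
  have hmem : (r, 0) ∈ Finset.range n ×ˢ Finset.range (colShape k 0) := by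
    simp only [Finset.mem_product, Finset.mem_range]
    exact ⟨lt_of_lt_of_le hrk hkn, by rw [colShape_zero hk]; omega⟩
  have hpt : ∀ p ∈ Finset.range n ×ˢ Finset.range (colShape k 0),
      ((updateBox t r 0 (insert x (t r 0)) p.1 p.2).card - 1)
        = ((t p.1 p.2).card - 1) + (if p = (r, 0) then 1 else 0) := by
    intro p hp
    by_cases hpe : p = (r, 0)
    · subst hpe
      have hne := ht.boxNonempty r 0 (colShape_pos_iff.mpr hrk)
      have hc := Finset.card_insert_of_notMem hx
      have hpos := Finset.card_pos.mpr hne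
      rw [if_pos rfl]
      have hsame : updateBox t r 0 (insert x (t r 0)) r 0 = insert x (t r 0) :=
        updateBox_same t r 0 _
      rw [show ((r, 0) : ℕ × ℕ).1 = r from rfl, show ((r, 0) : ℕ × ℕ).2 = 0 from rfl, hsame]
      omega
    · have hpe' : ¬(p.1 = r ∧ p.2 = 0) := by
        rintro ⟨ha, hb⟩
        exact hpe (Prod.ext_iff.mpr ⟨ha, hb⟩)
      rw [updateBox_ne t _ hpe', if_neg hpe]
      omega
  rw [Finset.sum_congr rfl hpt, Finset.sum_add_distrib,
    Finset.sum_ite_eq' _ ((r, 0) : ℕ × ℕ) (fun _ => 1), if_pos hmem]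

/-! #### The symmetric part of a monomial -/

noncomputable def cmon (n k i : ℕ) (t : Filling) : KPoly :=
  betaP ^ excess n (colShape k) t *
    ∏ j ∈ ((Finset.Icc 1 n).erase i).erase (i + 1),
      (MvPolynomial.X j : KPoly) ^ wt n (colShape k) t j

theorem mon_decomp (hi : 1 ≤ i) (hin : i < n) (t : Filling) :
    mon n k t = cmon n k i t * (MvPolynomial.X i : KPoly) ^ wt n (colShape k) t i
      * (MvPolynomial.X (i + 1) : KPoly) ^ wt n (colShape k) t (i + 1) := by
  unfold mon cmon xwt
  have h1 : i ∈ Finset.Icc 1 n := Finset.mem_Icc.mpr ⟨hi, by omega⟩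
  have h2 : i + 1 ∈ (Finset.Icc 1 n).erase i :=
    Finset.mem_erase.mpr ⟨by omega, Finset.mem_Icc.mpr ⟨by omega, by omega⟩⟩
  rw [← Finset.mul_prod_erase _ _ h1, ← Finset.mul_prod_erase _ _ h2]
  ring

theorem rename_cmon (i : ℕ) (t : Filling) :
    MvPolynomial.rename (Equiv.swap i (i + 1)) (cmon n k i t) = cmon n k i t := by
  unfold cmon betaP
  rw [map_mul, map_pow, MvPolynomial.rename_C, map_prod]
  congr 1
  refine Finset.prod_congr rfl fun j hj => ?_
  rw [map_pow, MvPolynomial.rename_X]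
  have h1 : j ≠ i + 1 := (Finset.mem_erase.mp hj).1
  have h2 : j ≠ i := (Finset.mem_erase.mp (Finset.mem_of_mem_erase hj)).1
  rw [Equiv.swap_apply_of_ne_of_ne h2 h1]

/-! #### Demazure–Lascoux operator computations -/

theorem Xsub_ne (i : ℕ) : (MvPolynomial.X i - MvPolynomial.X (i + 1) : KPoly) ≠ 0 := by
  intro h
  have h2 : (MvPolynomial.X i : KPoly) = MvPolynomial.X (i + 1) := sub_eq_zero.mp h
  have h3 := MvPolynomial.X_injective h2
  omega

variable {DL : ℕ → KPoly → KPoly}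

theorem DL_inv (hDL : IsDLOp n DL) (hi : 1 ≤ i) (hin : i < n) {c : KPoly}
    (hc : MvPolynomial.rename (Equiv.swap i (i + 1)) c = c) : DL i c = c := by
  apply mul_left_cancel₀ (Xsub_ne i)
  rw [hDL i hi hin c, DLnum, hc]
  ring

theorem DL_xi (hDL : IsDLOp n DL) (hi : 1 ≤ i) (hin : i < n) {c : KPoly}
    (hc : MvPolynomial.rename (Equiv.swap i (i + 1)) c = c) :
    DL i (c * MvPolynomial.X i) = c * MvPolynomial.X i + c * MvPolynomial.X (i + 1)
      + betaP * c * (MvPolynomial.X i * MvPolynomial.X (i + 1)) := by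
  apply mul_left_cancel₀ (Xsub_ne i)
  rw [hDL i hi hin _, DLnum, map_mul, hc, MvPolynomial.rename_X, Equiv.swap_apply_left]
  ring

theorem DL_xi1 (hDL : IsDLOp n DL) (hi : 1 ≤ i) (hin : i < n) {c : KPoly}
    (hc : MvPolynomial.rename (Equiv.swap i (i + 1)) c = c) :
    DL i (c * MvPolynomial.X (i + 1))
      = -(betaP * c * (MvPolynomial.X i * MvPolynomial.X (i + 1))) := by
  apply mul_left_cancel₀ (Xsub_ne i)
  rw [hDL i hi hin _, DLnum, map_mul, hc, MvPolynomial.rename_X, Equiv.swap_apply_right]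
  ring

theorem DL_xx (hDL : IsDLOp n DL) (hi : 1 ≤ i) (hin : i < n) {c : KPoly}
    (hc : MvPolynomial.rename (Equiv.swap i (i + 1)) c = c) :
    DL i (c * (MvPolynomial.X i * MvPolynomial.X (i + 1)))
      = c * (MvPolynomial.X i * MvPolynomial.X (i + 1)) := by
  apply mul_left_cancel₀ (Xsub_ne i)
  rw [hDL i hi hin _, DLnum, map_mul, map_mul, hc, MvPolynomial.rename_X,
    MvPolynomial.rename_X, Equiv.swap_apply_left, Equiv.swap_apply_right]
  ring

theorem DL_sum (hDL : IsDLOp n DL) (hi : 1 ≤ i) (hin : i < n)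
    (s : Finset Filling) (f : Filling → KPoly) :
    DL i (∑ t ∈ s, f t) = ∑ t ∈ s, DL i (f t) := by
  apply mul_left_cancel₀ (Xsub_ne i)
  rw [hDL i hi hin, Finset.mul_sum, DLnum, map_sum, Finset.mul_sum, Finset.mul_sum,
    ← Finset.sum_sub_distrib]
  refine Finset.sum_congr rfl fun t _ => ?_
  rw [hDL i hi hin (f t), DLnum]

/-! #### Per-element monomial computations -/

theorem has_update_iff {r1 : ℕ} {A : Finset ℕ} {j : ℕ}
    (hA : j ∈ A ↔ j ∈ t r1 0) :
    (∃ r, j ∈ updateBox t r1 0 A r 0) ↔ ∃ r, j ∈ t r 0 := by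
  constructor
  · rintro ⟨r, hr⟩
    rcases mem_update_iff.mp hr with ⟨hre, hm⟩ | ⟨-, hm⟩
    · exact ⟨r1, hA.mp hm⟩
    · exact ⟨r, hm⟩
  · rintro ⟨r, hr⟩
    by_cases hre : r = r1
    · exact ⟨r1, mem_update_iff.mpr (Or.inl ⟨rfl, hA.mpr (hre ▸ hr)⟩)⟩
    · exact ⟨r, mem_update_iff.mpr (Or.inr ⟨hre, hr⟩)⟩

theorem xprod_congr (hk : 1 ≤ k) (hkn : k ≤ n) {t1 t2 : Filling}
    (ht1 : IsSVT n (colShape k) t1) (ht2 : IsSVT n (colShape k) t2)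
    (hwt : ∀ j, j ≠ i → j ≠ i + 1 → ((∃ r, j ∈ t1 r 0) ↔ ∃ r, j ∈ t2 r 0)) :
    ∏ j ∈ ((Finset.Icc 1 n).erase i).erase (i + 1),
        (MvPolynomial.X j : KPoly) ^ wt n (colShape k) t1 j
      = ∏ j ∈ ((Finset.Icc 1 n).erase i).erase (i + 1),
        (MvPolynomial.X j : KPoly) ^ wt n (colShape k) t2 j := by
  refine Finset.prod_congr rfl fun j hj => ?_
  have h1 : j ≠ i + 1 := (Finset.mem_erase.mp hj).1
  have h2 : j ≠ i := (Finset.mem_erase.mp (Finset.mem_of_mem_erase hj)).1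
  rw [wt_eq_ite hk hkn ht1, wt_eq_ite hk hkn ht2]
  by_cases h : ∃ r, j ∈ t2 r 0
  · rw [if_pos h, if_pos ((hwt j h2 h1).mpr h)]
  · rw [if_neg h, if_neg (fun hh => h ((hwt j h2 h1).mp hh))]

theorem cmon_congr (hk : 1 ≤ k) (hkn : k ≤ n) {t1 t2 : Filling}
    (ht1 : IsSVT n (colShape k) t1) (ht2 : IsSVT n (colShape k) t2)
    (hex : excess n (colShape k) t1 = excess n (colShape k) t2)
    (hwt : ∀ j, j ≠ i → j ≠ i + 1 → ((∃ r, j ∈ t1 r 0) ↔ ∃ r, j ∈ t2 r 0)) :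
    cmon n k i t1 = cmon n k i t2 := by
  unfold cmon
  rw [hex, xprod_congr hk hkn ht1 ht2 hwt]

theorem cmon_beta (hk : 1 ≤ k) (hkn : k ≤ n) {t1 t2 : Filling}
    (ht1 : IsSVT n (colShape k) t1) (ht2 : IsSVT n (colShape k) t2)
    (hex : excess n (colShape k) t1 = excess n (colShape k) t2 + 1)
    (hwt : ∀ j, j ≠ i → j ≠ i + 1 → ((∃ r, j ∈ t1 r 0) ↔ ∃ r, j ∈ t2 r 0)) :
    cmon n k i t1 = betaP * cmon n k i t2 := by
  unfold cmon
  rw [hex, pow_succ, xprod_congr hk hkn ht1 ht2 hwt]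
  ring

theorem pe_B {DL : ℕ → KPoly → KPoly} (hDL : IsDLOp n DL) (hk : 1 ≤ k) (hkn : k ≤ n)
    (ht : IsSVT n (colShape k) t) (hi : 1 ≤ i) (hin : i < n) (hq : qB i t) :
    DL i (mon n k t) = mon n k t + mon n k (raiseT i t) + mon n k (addDT i t) := by
  have hmem : i ∈ t (rowOf t i) 0 := rowOf_mem hq.1
  have hr1 : rowOf t i < k := (mem_box ht hmem).1
  have hsvtR := svt_raiseT ht hin hq
  have hsvtD := svt_addDT ht hin hq
  have hwti : wt n (colShape k) t i = 1 := by rw [wt_eq_ite hk hkn ht, if_pos hq.1]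
  have hwti1 : wt n (colShape k) t (i + 1) = 0 := by rw [wt_eq_ite hk hkn ht, if_neg hq.2]
  have hmont : mon n k t = cmon n k i t * MvPolynomial.X i := by
    rw [mon_decomp hi hin, hwti, hwti1]; ring
  -- raiseT
  have hAiff : ∀ j, j ≠ i → j ≠ i + 1 →
      ((∃ r, j ∈ raiseT i t r 0) ↔ ∃ r, j ∈ t r 0) := by
    intro j h2 h1
    apply has_update_iff
    constructor
    · intro hj
      rcases Finset.mem_insert.mp hj with h | h
      · exact absurd h h1
      · exact Finset.mem_of_mem_erase h
    · intro hj
      exact Finset.mem_insert_of_mem (Finset.mem_erase.mpr ⟨h2, hj⟩)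
  have hexR : excess n (colShape k) (raiseT i t) = excess n (colShape k) t := by
    apply excess_update_card
    have hnotin : (i + 1) ∉ (t (rowOf t i) 0).erase i :=
      fun h => hq.2 ⟨_, Finset.mem_of_mem_erase h⟩
    rw [Finset.card_insert_of_notMem hnotin, Finset.card_erase_of_mem hmem]
    have hpos : 0 < (t (rowOf t i) 0).card := Finset.card_pos.mpr ⟨i, hmem⟩
    omega
  have hqCR := qC_raiseT ht hq
  have hwtRi : wt n (colShape k) (raiseT i t) i = 0 := by
    rw [wt_eq_ite hk hkn hsvtR, if_neg hqCR.2]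
  have hwtRi1 : wt n (colShape k) (raiseT i t) (i + 1) = 1 := by
    rw [wt_eq_ite hk hkn hsvtR, if_pos hqCR.1]
  have hmonR : mon n k (raiseT i t) = cmon n k i t * MvPolynomial.X (i + 1) := by
    rw [mon_decomp hi hin, hwtRi, hwtRi1, cmon_congr hk hkn hsvtR ht hexR hAiff]; ring
  -- addDT
  have hqDD := qD_addDT hq
  have hAiffD : ∀ j, j ≠ i → j ≠ i + 1 →
      ((∃ r, j ∈ addDT i t r 0) ↔ ∃ r, j ∈ t r 0) := by
    intro j h2 h1
    apply has_update_iff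
    constructor
    · intro hj
      rcases Finset.mem_insert.mp hj with h | h
      · exact absurd h h1
      · exact h
    · exact Finset.mem_insert_of_mem
  have hexD : excess n (colShape k) (addDT i t) = excess n (colShape k) t + 1 :=
    excess_update_insert hk hkn ht hr1 (fun h => hq.2 ⟨_, h⟩)
  have hwtDi : wt n (colShape k) (addDT i t) i = 1 := by
    rw [wt_eq_ite hk hkn hsvtD, if_pos ⟨_, hqDD.choose_spec.1⟩]
  have hwtDi1 : wt n (colShape k) (addDT i t) (i + 1) = 1 := by
    rw [wt_eq_ite hk hkn hsvtD, if_pos ⟨_, hqDD.choose_spec.2⟩]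
  have hmonD : mon n k (addDT i t)
      = betaP * cmon n k i t * (MvPolynomial.X i * MvPolynomial.X (i + 1)) := by
    rw [mon_decomp hi hin, hwtDi, hwtDi1, cmon_beta hk hkn hsvtD ht hexD hAiffD]; ring
  rw [hmont, DL_xi hDL hi hin (rename_cmon i t), hmonR, hmonD]

theorem pe_C {DL : ℕ → KPoly → KPoly} (hDL : IsDLOp n DL) (hk : 1 ≤ k) (hkn : k ≤ n)
    (ht : IsSVT n (colShape k) t) (hi : 1 ≤ i) (hin : i < n) (hq : qC i t) :
    DL i (mon n k t) = -(mon n k (addIT i t)) := by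
  have hmem : (i + 1) ∈ t (rowOf t (i + 1)) 0 := rowOf_mem hq.1
  have hr1 : rowOf t (i + 1) < k := (mem_box ht hmem).1
  have hsvtI := svt_addIT ht hi hq
  have hwti : wt n (colShape k) t i = 0 := by rw [wt_eq_ite hk hkn ht, if_neg hq.2]
  have hwti1 : wt n (colShape k) t (i + 1) = 1 := by rw [wt_eq_ite hk hkn ht, if_pos hq.1]
  have hmont : mon n k t = cmon n k i t * MvPolynomial.X (i + 1) := by
    rw [mon_decomp hi hin, hwti, hwti1]; ring
  have hqDI := qD_addIT hq
  have hAiff : ∀ j, j ≠ i → j ≠ i + 1 →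
      ((∃ r, j ∈ addIT i t r 0) ↔ ∃ r, j ∈ t r 0) := by
    intro j h2 h1
    apply has_update_iff
    constructor
    · intro hj
      rcases Finset.mem_insert.mp hj with h | h
      · exact absurd h h2
      · exact h
    · exact Finset.mem_insert_of_mem
  have hexI : excess n (colShape k) (addIT i t) = excess n (colShape k) t + 1 :=
    excess_update_insert hk hkn ht hr1 (fun h => hq.2 ⟨_, h⟩)
  have hwtIi : wt n (colShape k) (addIT i t) i = 1 := by
    rw [wt_eq_ite hk hkn hsvtI, if_pos ⟨_, hqDI.choose_spec.1⟩]
  have hwtIi1 : wt n (colShape k) (addIT i t) (i + 1) = 1 := by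
    rw [wt_eq_ite hk hkn hsvtI, if_pos ⟨_, hqDI.choose_spec.2⟩]
  have hmonI : mon n k (addIT i t)
      = betaP * cmon n k i t * (MvPolynomial.X i * MvPolynomial.X (i + 1)) := by
    rw [mon_decomp hi hin, hwtIi, hwtIi1, cmon_beta hk hkn hsvtI ht hexI hAiff]; ring
  rw [hmont, DL_xi1 hDL hi hin (rename_cmon i t), hmonI]

theorem pe_D {DL : ℕ → KPoly → KPoly} (hDL : IsDLOp n DL) (hk : 1 ≤ k) (hkn : k ≤ n)
    (ht : IsSVT n (colShape k) t) (hi : 1 ≤ i) (hin : i < n) (hq : qD i t) :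
    DL i (mon n k t) = mon n k t := by
  have hwti : wt n (colShape k) t i = 1 := by
    rw [wt_eq_ite hk hkn ht, if_pos ⟨_, hq.choose_spec.1⟩]
  have hwti1 : wt n (colShape k) t (i + 1) = 1 := by
    rw [wt_eq_ite hk hkn ht, if_pos ⟨_, hq.choose_spec.2⟩]
  have hmont : mon n k t
      = cmon n k i t * (MvPolynomial.X i * MvPolynomial.X (i + 1)) := by
    rw [mon_decomp hi hin, hwti, hwti1]; ring
  rw [hmont, DL_xx hDL hi hin (rename_cmon i t)]

theorem pe_R {DL : ℕ → KPoly → KPoly} (hDL : IsDLOp n DL) (hk : 1 ≤ k) (hkn : k ≤ n)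
    (ht : IsSVT n (colShape k) t) (hi : 1 ≤ i) (hin : i < n)
    (hq1 : ¬ qC i t) (hq2 : ¬ qB i t) :
    DL i (mon n k t) = mon n k t := by
  have hiff : (∃ r, i ∈ t r 0) ↔ (∃ r, (i + 1) ∈ t r 0) := by
    constructor
    · intro h; by_contra h'; exact hq2 ⟨h, h'⟩
    · intro h; by_contra h'; exact hq1 ⟨h, h'⟩
  have hww : wt n (colShape k) t (i + 1) = wt n (colShape k) t i := by
    rw [wt_eq_ite hk hkn ht, wt_eq_ite hk hkn ht]
    by_cases h : ∃ r, i ∈ t r 0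
    · rw [if_pos h, if_pos (hiff.mp h)]
    · rw [if_neg h, if_neg (fun hh => h (hiff.mpr hh))]
  apply DL_inv hDL hi hin
  rw [mon_decomp hi hin, hww]
  rw [map_mul, map_mul, map_pow, map_pow, rename_cmon, MvPolynomial.rename_X,
    MvPolynomial.rename_X, Equiv.swap_apply_left, Equiv.swap_apply_right]
  ring

/-! #### The character of one Demazure step -/

theorem char_step {DL : ℕ → KPoly → KPoly} (hDL : IsDLOp n DL) (hk : 1 ≤ k) (hkn : k ≤ n)
    (hi : 1 ≤ i) (hin : i < n) (m : ℕ → ℕ) :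
    charSet n (colShape k) {t : Filling | IsSVT n (colShape k) t ∧ dstep i t ∈ Dset n k m}
      = DL i (charSet n (colShape k) (Dset n k m)) := by
  have hX : (Dset n k m).Finite := dset_finite m
  have hX' : ({t : Filling | IsSVT n (colShape k) t ∧ dstep i t ∈ Dset n k m}).Finite :=
    svt_finite.subset fun t ht => ht.1
  rw [charSet_eq hX', charSet_eq hX, DL_sum hDL hi hin]
  have hmemF : ∀ t, t ∈ hX.toFinset ↔
      (IsSVT n (colShape k) t ∧ ∀ r < k, ∀ a ∈ t r 0, a ≤ m r) := by
    intro t; rw [Set.Finite.mem_toFinset]; exact Iff.rfl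
  have hmemF' : ∀ t, t ∈ hX'.toFinset ↔
      (IsSVT n (colShape k) t ∧ dstep i t ∈ Dset n k m) := by
    intro t; rw [Set.Finite.mem_toFinset]; exact Iff.rfl
  have hsplit : ∀ (G : Finset Filling) (f : Filling → KPoly),
      ∑ t ∈ G, f t
        = ∑ t ∈ G.filter (fun t => qC i t), f t
          + (∑ t ∈ G.filter (fun t => qD i t), f t
            + (∑ t ∈ G.filter (fun t => qB i t), f t
              + ∑ t ∈ G.filter (fun t => ¬ qC i t ∧ ¬ qD i t ∧ ¬ qB i t), f t)) := by
    intro G f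
    rw [← Finset.sum_filter_add_sum_filter_not G (fun t => qC i t) f]
    congr 1
    rw [← Finset.sum_filter_add_sum_filter_not
      (G.filter fun t => ¬ qC i t) (fun t => qD i t) f]
    congr 1
    · refine Finset.sum_congr ?_ fun _ _ => rfl
      ext t
      simp only [Finset.mem_filter]
      constructor
      · rintro ⟨⟨hG, -⟩, h⟩; exact ⟨hG, h⟩
      · rintro ⟨hG, h⟩
        exact ⟨⟨hG, fun hc => hc.2 ⟨h.choose, h.choose_spec.1⟩⟩, h⟩
    · rw [← Finset.sum_filter_add_sum_filter_not
        ((G.filter fun t => ¬ qC i t).filter fun t => ¬ qD i t) (fun t => qB i t) f]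
      congr 1
      · refine Finset.sum_congr ?_ fun _ _ => rfl
        ext t
        simp only [Finset.mem_filter]
        constructor
        · rintro ⟨⟨⟨hG, -⟩, -⟩, h⟩; exact ⟨hG, h⟩
        · rintro ⟨hG, h⟩
          exact ⟨⟨⟨hG, fun hc => hc.2 h.1⟩, fun hd => h.2 ⟨hd.choose, hd.choose_spec.2⟩⟩, h⟩
      · refine Finset.sum_congr ?_ fun _ _ => rfl
        ext t
        simp only [Finset.mem_filter]
        constructor
        · rintro ⟨⟨⟨hG, h1⟩, h2⟩, h3⟩; exact ⟨hG, h1, h2, h3⟩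
        · rintro ⟨hG, h1, h2, h3⟩; exact ⟨⟨⟨hG, h1⟩, h2⟩, h3⟩
  rw [hsplit hX'.toFinset (mon n k), hsplit hX.toFinset (fun t => DL i (mon n k t))]
  -- the C-part of the preimage
  have hC : ∑ t ∈ hX'.toFinset.filter (fun t => qC i t), mon n k t
      = ∑ t ∈ hX.toFinset.filter (fun t => qB i t), mon n k (raiseT i t) := by
    refine Finset.sum_nbij' (fun t => dstep i t) (fun t => raiseT i t) ?_ ?_ ?_ ?_ ?_
    · intro a ha
      obtain ⟨haF, haq⟩ := Finset.mem_filter.mp ha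
      obtain ⟨hsvt, hd⟩ := (hmemF' a).mp haF
      refine Finset.mem_filter.mpr ⟨(hmemF _).mpr hd, ?_⟩
      show qB i (dstep i a)
      rw [dstep_of_qC haq]
      exact qB_lowerT hsvt haq
    · intro b hb
      obtain ⟨hbF, hbq⟩ := Finset.mem_filter.mp hb
      obtain ⟨hsvt, hbound⟩ := (hmemF b).mp hbF
      refine Finset.mem_filter.mpr ⟨(hmemF' _).mpr ⟨svt_raiseT hsvt hin hbq, ?_⟩,
        qC_raiseT hsvt hbq⟩
      show dstep i (raiseT i b) ∈ Dset n k m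
      rw [rt_dstep_raiseT hsvt hin hbq]
      exact ⟨hsvt, hbound⟩
    · intro a ha
      obtain ⟨haF, haq⟩ := Finset.mem_filter.mp ha
      obtain ⟨hsvt, -⟩ := (hmemF' a).mp haF
      exact rt_raiseT_dstep hsvt hi haq
    · intro b hb
      obtain ⟨hbF, hbq⟩ := Finset.mem_filter.mp hb
      obtain ⟨hsvt, -⟩ := (hmemF b).mp hbF
      exact rt_dstep_raiseT hsvt hin hbq
    · intro a ha
      obtain ⟨haF, haq⟩ := Finset.mem_filter.mp ha
      obtain ⟨hsvt, -⟩ := (hmemF' a).mp haF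
      show mon n k a = mon n k (raiseT i (dstep i a))
      rw [rt_raiseT_dstep hsvt hi haq]
  -- the D-part of the preimage
  have hD : ∑ t ∈ hX'.toFinset.filter (fun t => qD i t), mon n k t
      = ∑ t ∈ hX.toFinset.filter (fun t => qB i t), mon n k (addDT i t) := by
    refine Finset.sum_nbij' (fun t => dstep i t) (fun t => addDT i t) ?_ ?_ ?_ ?_ ?_
    · intro a ha
      obtain ⟨haF, haq⟩ := Finset.mem_filter.mp ha
      obtain ⟨hsvt, hd⟩ := (hmemF' a).mp haF
      refine Finset.mem_filter.mpr ⟨(hmemF _).mpr hd, ?_⟩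
      show qB i (dstep i a)
      rw [dstep_of_qD hsvt haq]
      exact qB_eraseDT hsvt haq
    · intro b hb
      obtain ⟨hbF, hbq⟩ := Finset.mem_filter.mp hb
      obtain ⟨hsvt, hbound⟩ := (hmemF b).mp hbF
      refine Finset.mem_filter.mpr ⟨(hmemF' _).mpr ⟨svt_addDT hsvt hin hbq, ?_⟩,
        qD_addDT hbq⟩
      show dstep i (addDT i b) ∈ Dset n k m
      rw [rt_dstep_addDT hsvt hin hbq]
      exact ⟨hsvt, hbound⟩
    · intro a ha
      obtain ⟨haF, haq⟩ := Finset.mem_filter.mp ha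
      obtain ⟨hsvt, -⟩ := (hmemF' a).mp haF
      exact rt_addDT_dstep hsvt haq
    · intro b hb
      obtain ⟨hbF, hbq⟩ := Finset.mem_filter.mp hb
      obtain ⟨hsvt, -⟩ := (hmemF b).mp hbF
      exact rt_dstep_addDT hsvt hin hbq
    · intro a ha
      obtain ⟨haF, haq⟩ := Finset.mem_filter.mp ha
      obtain ⟨hsvt, -⟩ := (hmemF' a).mp haF
      show mon n k a = mon n k (addDT i (dstep i a))
      rw [rt_addDT_dstep hsvt haq]
  -- fixed parts agree
  have hfix : ∀ t : Filling, ¬ qC i t → ¬ qD i t →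
      (t ∈ hX'.toFinset ↔ t ∈ hX.toFinset) := by
    intro t h1 h2
    rw [hmemF, hmemF']
    constructor
    · rintro ⟨hsvt, hd⟩
      rw [dstep_of_fix h1 h2] at hd
      exact ⟨hsvt, hd.2⟩
    · rintro ⟨hsvt, hbound⟩
      rw [dstep_of_fix h1 h2]
      exact ⟨hsvt, hsvt, hbound⟩
  have hBeq : hX'.toFinset.filter (fun t => qB i t)
      = hX.toFinset.filter (fun t => qB i t) := by
    ext t
    rw [Finset.mem_filter, Finset.mem_filter]
    constructor
    · rintro ⟨hF, hq⟩
      exact ⟨(hfix t (fun hc => hc.2 hq.1) (fun hd => hq.2 ⟨hd.choose, hd.choose_spec.2⟩)).mp hF, hq⟩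
    · rintro ⟨hF, hq⟩
      exact ⟨(hfix t (fun hc => hc.2 hq.1) (fun hd => hq.2 ⟨hd.choose, hd.choose_spec.2⟩)).mpr hF, hq⟩
  have hReq : hX'.toFinset.filter (fun t => ¬ qC i t ∧ ¬ qD i t ∧ ¬ qB i t)
      = hX.toFinset.filter (fun t => ¬ qC i t ∧ ¬ qD i t ∧ ¬ qB i t) := by
    ext t
    rw [Finset.mem_filter, Finset.mem_filter]
    constructor
    · rintro ⟨hF, hq⟩
      exact ⟨(hfix t hq.1 hq.2.1).mp hF, hq⟩
    · rintro ⟨hF, hq⟩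
      exact ⟨(hfix t hq.1 hq.2.1).mpr hF, hq⟩
  -- per-element rewrites on the DL side
  have hDLB : ∑ t ∈ hX.toFinset.filter (fun t => qB i t), DL i (mon n k t)
      = ∑ t ∈ hX.toFinset.filter (fun t => qB i t),
          (mon n k t + mon n k (raiseT i t) + mon n k (addDT i t)) := by
    refine Finset.sum_congr rfl fun t ht' => ?_
    obtain ⟨hF, hq⟩ := Finset.mem_filter.mp ht'
    exact pe_B hDL hk hkn ((hmemF t).mp hF).1 hi hin hq
  have hDLC : ∑ t ∈ hX.toFinset.filter (fun t => qC i t), DL i (mon n k t)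
      = ∑ t ∈ hX.toFinset.filter (fun t => qC i t), -(mon n k (addIT i t)) := by
    refine Finset.sum_congr rfl fun t ht' => ?_
    obtain ⟨hF, hq⟩ := Finset.mem_filter.mp ht'
    exact pe_C hDL hk hkn ((hmemF t).mp hF).1 hi hin hq
  have hDLD : ∑ t ∈ hX.toFinset.filter (fun t => qD i t), DL i (mon n k t)
      = ∑ t ∈ hX.toFinset.filter (fun t => qD i t), mon n k t := by
    refine Finset.sum_congr rfl fun t ht' => ?_
    obtain ⟨hF, hq⟩ := Finset.mem_filter.mp ht'
    exact pe_D hDL hk hkn ((hmemF t).mp hF).1 hi hin hq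
  have hDLR : ∑ t ∈ hX.toFinset.filter (fun t => ¬ qC i t ∧ ¬ qD i t ∧ ¬ qB i t),
        DL i (mon n k t)
      = ∑ t ∈ hX.toFinset.filter (fun t => ¬ qC i t ∧ ¬ qD i t ∧ ¬ qB i t), mon n k t := by
    refine Finset.sum_congr rfl fun t ht' => ?_
    obtain ⟨hF, hq⟩ := Finset.mem_filter.mp ht'
    exact pe_R hDL hk hkn ((hmemF t).mp hF).1 hi hin hq.1 hq.2.2
  -- C/D cancellation on the DL side
  have hCD : ∑ t ∈ hX.toFinset.filter (fun t => qC i t), mon n k (addIT i t)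
      = ∑ t ∈ hX.toFinset.filter (fun t => qD i t), mon n k t := by
    refine Finset.sum_nbij' (fun t => addIT i t) (fun t => eraseIT i t) ?_ ?_ ?_ ?_ ?_
    · intro a ha
      obtain ⟨haF, haq⟩ := Finset.mem_filter.mp ha
      obtain ⟨hsvt, hbound⟩ := (hmemF a).mp haF
      have hmemi1 : (i + 1) ∈ a (rowOf a (i + 1)) 0 := rowOf_mem haq.1
      have hrk : rowOf a (i + 1) < k := (mem_box hsvt hmemi1).1
      refine Finset.mem_filter.mpr ⟨(hmemF _).mpr ⟨svt_addIT hsvt hi haq, ?_⟩, qD_addIT haq⟩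
      intro r hr a' ha'
      rcases mem_update_iff.mp ha' with ⟨hre, hm⟩ | ⟨-, hm⟩
      · rcases Finset.mem_insert.mp hm with hae | hm
        · have := hbound (rowOf a (i + 1)) hrk (i + 1) hmemi1
          subst hre; omega
        · exact hbound r hr a' (by rw [hre]; exact hm)
      · exact hbound r hr a' hm
    · intro b hb
      obtain ⟨hbF, hbq⟩ := Finset.mem_filter.mp hb
      obtain ⟨hsvt, hbound⟩ := (hmemF b).mp hbF
      refine Finset.mem_filter.mpr ⟨(hmemF _).mpr ⟨svt_eraseIT hsvt hbq, ?_⟩,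
        qC_eraseIT hsvt hbq⟩
      intro r hr a' ha'
      rcases mem_update_iff.mp ha' with ⟨hre, hm⟩ | ⟨-, hm⟩
      · exact hbound r hr a' (by rw [hre]; exact Finset.mem_of_mem_erase hm)
      · exact hbound r hr a' hm
    · intro a ha
      obtain ⟨haF, haq⟩ := Finset.mem_filter.mp ha
      exact rt_eraseIT_addIT ((hmemF a).mp haF).1 hi haq
    · intro b hb
      obtain ⟨hbF, hbq⟩ := Finset.mem_filter.mp hb
      exact rt_addIT_eraseIT ((hmemF b).mp hbF).1 hbq
    · intro a ha; rfl
  rw [hC, hD, hBeq, hReq, hDLB, hDLC, hDLD, hDLR, ← hCD, Finset.sum_add_distrib,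
    Finset.sum_add_distrib, Finset.sum_neg_distrib]
  ring

/-! #### Base case -/

theorem svt_uTab (hkn : k ≤ n) : IsSVT n (colShape k) (uTab (colShape k)) := by
  constructor
  · intro r c hc
    unfold uTab; rw [if_pos hc]
    exact ⟨r + 1, Finset.mem_singleton_self _⟩
  · intro r c hc
    unfold uTab; rw [if_neg hc]
  · intro r c a ha
    unfold uTab at ha
    split_ifs at ha with h
    · have hr : r < k := colShape_pos_iff.mp (by omega)
      rw [Finset.mem_singleton] at ha
      omega
    · simp at ha
  · intro r c a b ha hb
    unfold uTab at hb
    split_ifs at hb with h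
    · have := colShape_le_one k r; omega
    · simp at hb
  · intro r c a b ha hb
    have ha' : c < colShape k r ∧ a = r + 1 := by
      unfold uTab at ha
      split_ifs at ha with h
      · exact ⟨h, Finset.mem_singleton.mp ha⟩
      · simp at ha
    have hb' : b = r + 2 := by
      unfold uTab at hb
      split_ifs at hb with h
      · have := Finset.mem_singleton.mp hb; omega
      · simp at hb
    omega

theorem dset_m0 (hk : 1 ≤ k) (hkn : k ≤ n) :
    Dset n k (fun r => r + 1) = {uTab (colShape k)} := by
  ext t
  simp only [Dset, Set.mem_setOf_eq, Set.mem_singleton_iff]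
  constructor
  · rintro ⟨ht, hbound⟩
    have hlow : ∀ r < k, ∀ a ∈ t r 0, r + 1 ≤ a := by
      intro r
      induction r with
      | zero => intro h a ha; exact (ht.entryBounds _ _ _ ha).1
      | succ r ih =>
        intro h a ha
        obtain ⟨b, hb⟩ := ht.boxNonempty r 0 (colShape_pos_iff.mpr (by omega))
        have h1 := ih (by omega) b hb
        have h2 := ht.colStrict r 0 b a hb ha
        omega
    have hbox : ∀ r < k, t r 0 = {r + 1} := by
      intro r hr
      have hne := ht.boxNonempty r 0 (colShape_pos_iff.mpr hr)
      have hsub : t r 0 ⊆ {r + 1} := by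
        intro a ha
        have h1 := hbound r hr a ha
        have h2 := hlow r hr a ha
        rw [Finset.mem_singleton]; omega
      rcases Finset.subset_singleton_iff.mp hsub with h | h
      · exfalso; rw [h] at hne; exact Finset.not_nonempty_empty hne
      · exact h
    funext r c
    by_cases hc : c < colShape k r
    · have hr : r < k := colShape_pos_iff.mp (by omega)
      have hc0 : c = 0 := by have := colShape_le_one k r; omega
      subst hc0
      rw [hbox r hr]
      unfold uTab; rw [if_pos hc]
    · rw [ht.emptyOutside r c hc]
      unfold uTab; rw [if_neg hc]
  · rintro rfl
    refine ⟨svt_uTab hkn, ?_⟩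
    intro r hr a ha
    unfold uTab at ha
    split_ifs at ha with h
    · rw [Finset.mem_singleton] at ha; omega
    · simp at ha

theorem charSet_uTab (hk : 1 ≤ k) (hkn : k ≤ n) :
    charSet n (colShape k) {uTab (colShape k)}
      = ∏ j ∈ Finset.Icc 1 k, (MvPolynomial.X j : KPoly) := by
  rw [charSet, finsum_mem_singleton]
  have hex : excess n (colShape k) (uTab (colShape k)) = 0 := by
    unfold excess
    refine Finset.sum_eq_zero fun p hp => ?_
    unfold uTab
    split_ifs with h
    · simp
    · simp
  have hwt : ∀ j, wt n (colShape k) (uTab (colShape k)) j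
      = if 1 ≤ j ∧ j ≤ k then 1 else 0 := by
    intro j
    rw [wt_eq_ite hk hkn (svt_uTab hkn)]
    by_cases h : 1 ≤ j ∧ j ≤ k
    · rw [if_pos ?_, if_pos h]
      refine ⟨j - 1, ?_⟩
      unfold uTab
      rw [if_pos (colShape_pos_iff.mpr (by omega))]
      rw [Finset.mem_singleton]; omega
    · rw [if_neg ?_, if_neg h]
      rintro ⟨r, hr⟩
      unfold uTab at hr
      split_ifs at hr with h2
      · rw [Finset.mem_singleton] at hr
        have h3 := colShape_pos_iff.mp (by omega : 0 < colShape k r)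
        omega
      · simp at hr
  rw [hex, pow_zero, one_mul]
  unfold xwt
  have hsub : Finset.Icc 1 k ⊆ Finset.Icc 1 n := Finset.Icc_subset_Icc le_rfl hkn
  have h1 : ∏ j ∈ Finset.Icc 1 k,
        (MvPolynomial.X j : KPoly) ^ wt n (colShape k) (uTab (colShape k)) j
      = ∏ j ∈ Finset.Icc 1 n,
        (MvPolynomial.X j : KPoly) ^ wt n (colShape k) (uTab (colShape k)) j := by
    refine Finset.prod_subset hsub fun x hx hnx => ?_
    rw [hwt x, if_neg, pow_zero]
    intro hcon
    exact hnx (Finset.mem_Icc.mpr ⟨hcon.1, hcon.2⟩)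
  rw [← h1]
  refine Finset.prod_congr rfl fun j hj => ?_
  rw [hwt j, if_pos ?_, pow_one]
  exact Finset.mem_Icc.mp hj

theorem kdem_nil (hkn : k ≤ n) :
    KDem n (colShape k) (eK n (colShape k)) [] = {uTab (colShape k)} := by
  ext t
  simp only [KDem, Set.mem_setOf_eq, DemReach, Set.mem_singleton_iff]
  constructor
  · rintro ⟨-, h⟩; exact h
  · rintro rfl; exact ⟨svt_uTab hkn, rfl⟩

/-! #### The main induction -/

def mword (k : ℕ) : List ℕ → ℕ → ℕ
  | [] => fun r => r + 1
  | i :: rest => bump k i (mword k rest)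

theorem mword_mono (word : List ℕ) :
    ∀ r, r + 1 < k → mword k word r < mword k word (r + 1) := by
  induction word with
  | nil => intro r h; show r + 1 < r + 1 + 1; omega
  | cons i rest ih => exact bump_mono ih i

theorem main_lemma {DL : ℕ → KPoly → KPoly} (hDL : IsDLOp n DL) (hk : 1 ≤ k) (hkn : k ≤ n) :
    ∀ word : List ℕ, (∀ j ∈ word, 1 ≤ j ∧ j < n) →
      KDem n (colShape k) (eK n (colShape k)) word = Dset n k (mword k word) ∧
      charSet n (colShape k) (KDem n (colShape k) (eK n (colShape k)) word)
        = applyDL DL word (∏ j ∈ Finset.Icc 1 k, (MvPolynomial.X j : KPoly)) := by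
  intro word
  induction word with
  | nil =>
    intro _
    have h1 := kdem_nil (n := n) (k := k) hkn
    constructor
    · rw [h1]; exact (dset_m0 hk hkn).symm
    · rw [h1, charSet_uTab hk hkn]; rfl
  | cons i rest ih =>
    intro hw
    have hi : 1 ≤ i := (hw i (List.mem_cons_self (a := i) (l := rest))).1
    have hin : i < n := (hw i (List.mem_cons_self (a := i) (l := rest))).2
    obtain ⟨ih1, ih2⟩ := ih (fun j hj => hw j (List.mem_cons_of_mem i hj))
    have hstep : KDem n (colShape k) (eK n (colShape k)) (i :: rest)
        = {t : Filling | IsSVT n (colShape k) t ∧ dstep i t ∈ Dset n k (mword k rest)} := by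
      rw [kdem_cons hk hkn hi hin rest, ih1]
    constructor
    · rw [hstep, dstep_preimage hk hkn hi hin (mword_mono rest)]
      rfl
    · rw [hstep, char_step hDL hk hkn hi hin (mword k rest), ← ih1, ih2]
      rfl

/-! #### Inversions and reduced words -/

/-- Inversion count of a permutation of `{1, …, n}`. -/
def invCount (n : ℕ) (σ : Equiv.Perm ℕ) : ℕ :=
  ((Finset.Icc 1 n ×ˢ Finset.Icc 1 n).filter
    (fun p => p.1 < p.2 ∧ σ p.2 < σ p.1)).card

theorem wordPerm_cons (i : ℕ) (l : List ℕ) :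
    wordPerm (i :: l) = Equiv.swap i (i + 1) * wordPerm l := by
  unfold wordPerm; rw [List.map_cons, List.prod_cons]

theorem wordPerm_fix {word : List ℕ} (hw : ∀ j ∈ word, 1 ≤ j ∧ j < n) :
    ∀ x, x = 0 ∨ n < x → wordPerm word x = x := by
  induction word with
  | nil => intro x hx; rfl
  | cons i l ih =>
    intro x hx
    rw [wordPerm_cons, Equiv.Perm.mul_apply,
      ih (fun j hj => hw j (List.mem_cons_of_mem i hj)) x hx]
    have h := hw i (List.mem_cons_self (a := i) (l := l))
    apply Equiv.swap_apply_of_ne_of_ne <;> omega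

theorem perm_maps {σ : Equiv.Perm ℕ} (hfix : ∀ x, x = 0 ∨ n < x → σ x = x) :
    ∀ x, 1 ≤ x → x ≤ n → 1 ≤ σ x ∧ σ x ≤ n := by
  intro x h1 h2
  by_contra hcon
  have hbad : σ x = 0 ∨ n < σ x := by omega
  have h3 := hfix (σ x) hbad
  have heq := σ.injective h3
  omega

theorem inv_fix {σ : Equiv.Perm ℕ} (hfix : ∀ x, x = 0 ∨ n < x → σ x = x) :
    ∀ x, x = 0 ∨ n < x → σ⁻¹ x = x := by
  intro x hx
  have h := hfix x hx
  calc σ⁻¹ x = σ⁻¹ (σ x) := by rw [h]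
    _ = x := (Equiv.symm_apply_apply σ x : σ⁻¹ (σ x) = x)

theorem swap_lt_cases {i u v : ℕ} (h : Equiv.swap i (i + 1) v < Equiv.swap i (i + 1) u) :
    v < u ∨ (u = i ∧ v = i + 1) := by
  simp only [Equiv.swap_apply_def] at h
  split_ifs at h <;> omega

theorem swap_lt_iff {i u v : ℕ} (hne1 : ¬(u = i + 1 ∧ v = i)) (hne2 : ¬(u = i ∧ v = i + 1)) :
    Equiv.swap i (i + 1) v < Equiv.swap i (i + 1) u ↔ v < u := by
  simp only [Equiv.swap_apply_def]
  split_ifs <;> omega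

theorem invCount_one : invCount n 1 = 0 := by
  unfold invCount
  rw [Finset.card_eq_zero, Finset.filter_eq_empty_iff]
  rintro p -
  rintro ⟨h1, h2⟩
  simp only [Equiv.Perm.one_apply] at h2
  omega

theorem invCount_swap_le {i : ℕ} (hi : 1 ≤ i) (hin : i < n) (σ : Equiv.Perm ℕ) :
    invCount n (Equiv.swap i (i + 1) * σ) ≤ invCount n σ + 1 := by
  unfold invCount
  have hsub : ((Finset.Icc 1 n ×ˢ Finset.Icc 1 n).filter
        (fun p => p.1 < p.2 ∧ (Equiv.swap i (i + 1) * σ) p.2 < (Equiv.swap i (i + 1) * σ) p.1))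
      ⊆ insert (σ⁻¹ i, σ⁻¹ (i + 1))
        ((Finset.Icc 1 n ×ˢ Finset.Icc 1 n).filter (fun p => p.1 < p.2 ∧ σ p.2 < σ p.1)) := by
    intro p hp
    obtain ⟨hpS, hp1, hp2⟩ := Finset.mem_filter.mp hp
    rw [Equiv.Perm.mul_apply, Equiv.Perm.mul_apply] at hp2
    rcases swap_lt_cases hp2 with h | ⟨h1, h2⟩
    · exact Finset.mem_insert_of_mem (Finset.mem_filter.mpr ⟨hpS, hp1, h⟩)
    · have e1 : p.1 = σ⁻¹ i := by
        apply σ.injective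
        rw [← Equiv.Perm.mul_apply, mul_inv_cancel, Equiv.Perm.one_apply, h1]
      have e2 : p.2 = σ⁻¹ (i + 1) := by
        apply σ.injective
        rw [← Equiv.Perm.mul_apply, mul_inv_cancel, Equiv.Perm.one_apply, h2]
      have : p = (σ⁻¹ i, σ⁻¹ (i + 1)) := Prod.ext_iff.mpr ⟨e1, e2⟩
      rw [this]
      exact Finset.mem_insert_self _ _
  calc ((Finset.Icc 1 n ×ˢ Finset.Icc 1 n).filter
        (fun p => p.1 < p.2 ∧ (Equiv.swap i (i + 1) * σ) p.2 < (Equiv.swap i (i + 1) * σ) p.1)).card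
      ≤ (insert (σ⁻¹ i, σ⁻¹ (i + 1))
        ((Finset.Icc 1 n ×ˢ Finset.Icc 1 n).filter (fun p => p.1 < p.2 ∧ σ p.2 < σ p.1))).card :=
        Finset.card_le_card hsub
    _ ≤ _ + 1 := Finset.card_insert_le _ _

theorem invCount_swap_eq {σ : Equiv.Perm ℕ} {i : ℕ} (hi : 1 ≤ i) (hin : i < n)
    {x y : ℕ} (hx1 : 1 ≤ x) (hxy : x < y) (hyn : y ≤ n)
    (hsx : σ x = i + 1) (hsy : σ y = i) :
    invCount n σ = invCount n (Equiv.swap i (i + 1) * σ) + 1 := by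
  unfold invCount
  have hmemxy : (x, y) ∈ (Finset.Icc 1 n ×ˢ Finset.Icc 1 n).filter
      (fun p => p.1 < p.2 ∧ σ p.2 < σ p.1) := by
    refine Finset.mem_filter.mpr ⟨?_, hxy, by rw [hsx, hsy]; omega⟩
    simp only [Finset.mem_product, Finset.mem_Icc]
    omega
  have hAeq : (Finset.Icc 1 n ×ˢ Finset.Icc 1 n).filter
        (fun p => p.1 < p.2 ∧ (Equiv.swap i (i + 1) * σ) p.2 < (Equiv.swap i (i + 1) * σ) p.1)
      = ((Finset.Icc 1 n ×ˢ Finset.Icc 1 n).filter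
        (fun p => p.1 < p.2 ∧ σ p.2 < σ p.1)).erase (x, y) := by
    ext p
    simp only [Finset.mem_filter, Finset.mem_erase]
    constructor
    · rintro ⟨hS, hlt, hinv⟩
      rw [Equiv.Perm.mul_apply, Equiv.Perm.mul_apply] at hinv
      rcases swap_lt_cases hinv with h | ⟨h1, h2⟩
      · refine ⟨?_, hS, hlt, h⟩
        intro heq
        have e1 : p.1 = x := by rw [heq]
        have e2 : p.2 = y := by rw [heq]
        rw [e1, e2, hsx, hsy, Equiv.swap_apply_left, Equiv.swap_apply_right] at hinv
        omega
      · exfalso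
        have e1 : p.1 = y := σ.injective (by rw [h1, hsy])
        have e2 : p.2 = x := σ.injective (by rw [h2, hsx])
        omega
    · rintro ⟨hne, hS, hlt, hinv⟩
      refine ⟨hS, hlt, ?_⟩
      rw [Equiv.Perm.mul_apply, Equiv.Perm.mul_apply]
      have hne1 : ¬(σ p.1 = i + 1 ∧ σ p.2 = i) := by
        rintro ⟨h1, h2⟩
        exact hne (Prod.ext_iff.mpr
          ⟨σ.injective (by rw [h1, hsx]), σ.injective (by rw [h2, hsy])⟩)
      have hne2 : ¬(σ p.1 = i ∧ σ p.2 = i + 1) := by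
        rintro ⟨h1, h2⟩
        have e1 : p.1 = y := σ.injective (by rw [h1, hsy])
        have e2 : p.2 = x := σ.injective (by rw [h2, hsx])
        omega
      rw [swap_lt_iff hne1 hne2]
      exact hinv
  rw [hAeq, Finset.card_erase_of_mem hmemxy]
  have hpos : 0 < ((Finset.Icc 1 n ×ˢ Finset.Icc 1 n).filter
      (fun p => p.1 < p.2 ∧ σ p.2 < σ p.1)).card := Finset.card_pos.mpr ⟨(x, y), hmemxy⟩
  omega

theorem consec_mono {f : ℕ → ℕ} (h : ∀ i, 1 ≤ i → i + 1 ≤ n → f i < f (i + 1)) :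
    ∀ a b, 1 ≤ a → a < b → b ≤ n → f a < f b := by
  intro a b h1 hab
  induction b with
  | zero => omega
  | succ b ih =>
    intro hbn
    rcases Nat.lt_succ_iff_lt_or_eq.mp hab with h' | h'
    · exact lt_trans (ih h' (by omega)) (h b (by omega) (by omega))
    · subst h'; exact h a h1 hbn

theorem exists_word_of_fix :
    ∀ (N : ℕ) (σ : Equiv.Perm ℕ), invCount n σ = N → (∀ x, x = 0 ∨ n < x → σ x = x) →
      ∃ word : List ℕ, (∀ j ∈ word, 1 ≤ j ∧ j < n) ∧ wordPerm word = σ ∧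
        word.length = invCount n σ := by
  intro N
  induction N using Nat.strong_induction_on with
  | _ N ih =>
    intro σ hN hfix
    by_cases hdesc : ∃ i, 1 ≤ i ∧ i < n ∧ σ⁻¹ (i + 1) < σ⁻¹ i
    · obtain ⟨i, hi, hin, hlt⟩ := hdesc
      have hx1 : 1 ≤ σ⁻¹ (i + 1) := (perm_maps (inv_fix hfix) (i + 1) (by omega) (by omega)).1
      have hyn : σ⁻¹ i ≤ n := (perm_maps (inv_fix hfix) i hi (by omega)).2
      have hI2 := invCount_swap_eq hi hin hx1 hlt hyn
        (Equiv.apply_symm_apply σ (i + 1)) (Equiv.apply_symm_apply σ i)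
      have hfix' : ∀ x, x = 0 ∨ n < x → (Equiv.swap i (i + 1) * σ) x = x := by
        intro x hx
        rw [Equiv.Perm.mul_apply, hfix x hx]
        apply Equiv.swap_apply_of_ne_of_ne <;> omega
      obtain ⟨word', hw1, hw2, hw3⟩ := ih (invCount n (Equiv.swap i (i + 1) * σ))
        (by omega) (Equiv.swap i (i + 1) * σ) rfl hfix'
      refine ⟨i :: word', ?_, ?_, ?_⟩
      · intro j hj
        rcases List.mem_cons.mp hj with rfl | h
        · exact ⟨hi, hin⟩
        · exact hw1 j h
      · rw [wordPerm_cons, hw2, ← mul_assoc, Equiv.swap_mul_self, one_mul]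
      · simp only [List.length_cons, hw3]
        omega
    · push_neg at hdesc
      have hmono' : ∀ a b, 1 ≤ a → a < b → b ≤ n → σ⁻¹ a < σ⁻¹ b := by
        apply consec_mono
        intro j h1 h2
        have hle := hdesc j h1 (by omega)
        have hne : σ⁻¹ j ≠ σ⁻¹ (j + 1) := fun h => by
          have := σ⁻¹.injective h; omega
        omega
      have hge : ∀ a, 1 ≤ a → a ≤ n → a ≤ σ⁻¹ a := by
        intro a
        induction a with
        | zero => omega
        | succ a iha =>
          intro h1 h2
          by_cases ha : a = 0
          · subst ha
            exact (perm_maps (inv_fix hfix) 1 le_rfl h2).1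
          · have hh1 := iha (by omega) (by omega)
            have hh2 := hmono' a (a + 1) (by omega) (by omega) h2
            omega
      have hle : ∀ a, 1 ≤ a → a ≤ n → σ⁻¹ a ≤ a := by
        intro a h1 h2
        by_contra hc
        push_neg at hc
        have hstep : ∀ d, a + d ≤ n → a + d < σ⁻¹ (a + d) := by
          intro d
          induction d with
          | zero => intro h; simpa using hc
          | succ d ihd =>
            intro h
            have hh1 := ihd (by omega)
            have hh2 := hmono' (a + d) (a + d + 1) (by omega) (by omega) (by omega)
            have hrw : a + (d + 1) = a + d + 1 := rfl
            rw [hrw]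
            omega
        have h3 := hstep (n - a) (by omega)
        have h4 := (perm_maps (inv_fix hfix) (a + (n - a)) (by omega) (by omega)).2
        omega
      have hinv1 : σ⁻¹ = 1 := by
        ext x
        by_cases hx : 1 ≤ x ∧ x ≤ n
        · have := hge x hx.1 hx.2
          have := hle x hx.1 hx.2
          simp only [Equiv.Perm.coe_one, id_eq]
          omega
        · have := inv_fix hfix x (by omega)
          simp only [Equiv.Perm.coe_one, id_eq]
          omega
      have hσ1 : σ = 1 := by
        have := inv_eq_one.mp hinv1
        exact this
      refine ⟨[], by simp, ?_, ?_⟩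
      · rw [hσ1]; rfl
      · simp [hσ1, invCount_one]

theorem invCount_wordPerm_le (word : List ℕ) (hw : ∀ j ∈ word, 1 ≤ j ∧ j < n) :
    invCount n (wordPerm word) ≤ word.length := by
  induction word with
  | nil =>
    have h : wordPerm [] = (1 : Equiv.Perm ℕ) := rfl
    rw [h, invCount_one]
    exact Nat.zero_le _
  | cons i l ih =>
    have hi := hw i (List.mem_cons_self (a := i) (l := l))
    have h1 := invCount_swap_le (n := n) hi.1 hi.2 (wordPerm l)
    have h2 := ih (fun j hj => hw j (List.mem_cons_of_mem i hj))
    rw [wordPerm_cons]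
    simp only [List.length_cons]
    omega

theorem reduced_length {σ : Equiv.Perm ℕ} {word : List ℕ}
    (hred : IsReducedWord n σ word) : word.length = invCount n σ := by
  obtain ⟨hw, hperm, hmin⟩ := hred
  have h1 : invCount n σ ≤ word.length := by
    rw [← hperm]; exact invCount_wordPerm_le word hw
  obtain ⟨word', hw1, hw2, hw3⟩ := exists_word_of_fix (invCount n σ) σ rfl
    (fun x hx => by rw [← hperm]; exact wordPerm_fix hw x hx)
  have h2 := hmin word' hw1 hw2
  omega

theorem reduced_tail {σ : Equiv.Perm ℕ} {i : ℕ} {rest : List ℕ}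
    (hred : IsReducedWord n σ (i :: rest)) :
    IsReducedWord n (wordPerm rest) rest := by
  obtain ⟨hw, hperm, hmin⟩ := hred
  refine ⟨fun j hj => hw j (List.mem_cons_of_mem i hj), rfl, ?_⟩
  intro word' hw' hperm'
  have h := hmin (i :: word') ?_ ?_
  · simpa using h
  · intro j hj
    rcases List.mem_cons.mp hj with he | h'
    · rw [he]; exact hw i (List.mem_cons_self (a := i) (l := rest))
    · exact hw' j h'
  · rw [wordPerm_cons, hperm', ← wordPerm_cons, hperm]

/-! #### The image of the key under reduced words -/

theorem image_mword (hk : 1 ≤ k) (hkn : k ≤ n) :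
    ∀ word : List ℕ, IsReducedWord n (wordPerm word) word →
      (Finset.range k).image (mword k word)
        = (Finset.Icc 1 k).image (fun x => wordPerm word x) := by
  intro word
  induction word with
  | nil =>
    intro _
    ext y
    simp only [Finset.mem_image, Finset.mem_range, Finset.mem_Icc]
    constructor
    · rintro ⟨r, hr, rfl⟩
      exact ⟨r + 1, ⟨by omega, by omega⟩, rfl⟩
    · rintro ⟨x, ⟨h1, h2⟩, rfl⟩
      refine ⟨x - 1, by omega, ?_⟩
      show x - 1 + 1 = x
      omega
  | cons i rest ih =>
    intro hred
    have hredr := reduced_tail hred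
    have hw := hred.1
    have hi : 1 ≤ i := (hw i (List.mem_cons_self (a := i) (l := rest))).1
    have hin : i < n := (hw i (List.mem_cons_self (a := i) (l := rest))).2
    have hIm := ih hredr
    have hcase4 : ¬(((i + 1) ∈ (Finset.range k).image (mword k rest)) ∧
        i ∉ (Finset.range k).image (mword k rest)) := by
      rintro ⟨hip, hnoti⟩
      rw [hIm] at hip hnoti
      obtain ⟨x, hx, hxe⟩ := Finset.mem_image.mp hip
      rw [Finset.mem_Icc] at hx
      have hfixw : ∀ z, z = 0 ∨ n < z → wordPerm rest z = z := wordPerm_fix hredr.1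
      have hyv : wordPerm rest ((wordPerm rest)⁻¹ i) = i :=
        Equiv.apply_symm_apply (wordPerm rest) i
      have hyn := perm_maps (inv_fix hfixw) i hi (by omega)
      have hygt : k < (wordPerm rest)⁻¹ i := by
        by_contra hle
        exact hnoti (Finset.mem_image.mpr
          ⟨(wordPerm rest)⁻¹ i, Finset.mem_Icc.mpr ⟨hyn.1, by omega⟩, hyv⟩)
      have hI2 := invCount_swap_eq hi hin (by omega : 1 ≤ x)
        (by omega : x < (wordPerm rest)⁻¹ i) hyn.2 hxe hyv
      have hl1 := reduced_length hred
      have hl2 := reduced_length hredr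
      rw [wordPerm_cons] at hl1
      simp only [List.length_cons] at hl1
      omega
    have himg : (Finset.range k).image (bump k i (mword k rest))
        = ((Finset.range k).image (mword k rest)).image
            (fun z => Equiv.swap i (i + 1) z) := by
      ext z
      simp only [Finset.mem_image, Finset.mem_range]
      by_cases hcond : (∃ r, r < k ∧ mword k rest r = i) ∧
          ∀ r', r' < k → mword k rest r' ≠ i + 1
      · have hb : ∀ r, r < k → bump k i (mword k rest) r
            = Equiv.swap i (i + 1) (mword k rest r) := by
          intro r hr
          unfold bump
          by_cases hMr : mword k rest r = i
          · rw [if_pos ⟨hr, hMr, fun r' hr' => hcond.2 r' hr'⟩, hMr, Equiv.swap_apply_left]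
          · rw [if_neg (fun hc => hMr hc.2.1)]
            exact (Equiv.swap_apply_of_ne_of_ne hMr (hcond.2 r hr)).symm
        constructor
        · rintro ⟨r, hr, rfl⟩
          exact ⟨mword k rest r, ⟨r, hr, rfl⟩, (hb r hr).symm⟩
        · rintro ⟨u, ⟨r, hr, rfl⟩, rfl⟩
          exact ⟨r, hr, hb r hr⟩
      · have hb : ∀ r, r < k → bump k i (mword k rest) r = mword k rest r := by
          intro r hr
          unfold bump
          rw [if_neg]
          rintro ⟨h1, h2, h3⟩
          exact hcond ⟨⟨r, h1, h2⟩, fun r' hr' => h3 r' hr'⟩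
        by_cases hiIm : ∃ r, r < k ∧ mword k rest r = i
        · have hip : ∃ r, r < k ∧ mword k rest r = i + 1 := by
            by_contra hno
            push_neg at hno
            exact hcond ⟨hiIm, fun r' hr' => hno r' hr'⟩
          constructor
          · rintro ⟨r, hr, rfl⟩
            rw [hb r hr]
            by_cases h1 : mword k rest r = i
            · obtain ⟨r2, hr2, hM2⟩ := hip
              exact ⟨i + 1, ⟨r2, hr2, hM2⟩, by rw [Equiv.swap_apply_right, h1]⟩
            · by_cases h2 : mword k rest r = i + 1
              · obtain ⟨r2, hr2, hM2⟩ := hiIm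
                exact ⟨i, ⟨r2, hr2, hM2⟩, by rw [Equiv.swap_apply_left, h2]⟩
              · exact ⟨mword k rest r, ⟨r, hr, rfl⟩,
                  Equiv.swap_apply_of_ne_of_ne h1 h2⟩
          · rintro ⟨u, ⟨r, hr, rfl⟩, rfl⟩
            by_cases h1 : mword k rest r = i
            · obtain ⟨r2, hr2, hM2⟩ := hip
              exact ⟨r2, hr2, by rw [hb r2 hr2, hM2, h1, Equiv.swap_apply_left]⟩
            · by_cases h2 : mword k rest r = i + 1
              · obtain ⟨r2, hr2, hM2⟩ := hiIm
                exact ⟨r2, hr2, by rw [hb r2 hr2, hM2, h2, Equiv.swap_apply_right]⟩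
              · exact ⟨r, hr, by
                  rw [hb r hr, Equiv.swap_apply_of_ne_of_ne h1 h2]⟩
        · have hip : ¬ ∃ r, r < k ∧ mword k rest r = i + 1 := by
            intro hex
            apply hcase4
            constructor
            · obtain ⟨r, hr, hM⟩ := hex
              exact Finset.mem_image.mpr ⟨r, Finset.mem_range.mpr hr, hM⟩
            · intro hmemi
              obtain ⟨r, hr, hM⟩ := Finset.mem_image.mp hmemi
              exact hiIm ⟨r, Finset.mem_range.mp hr, hM⟩
          constructor
          · rintro ⟨r, hr, rfl⟩
            rw [hb r hr]
            exact ⟨mword k rest r, ⟨r, hr, rfl⟩,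
              Equiv.swap_apply_of_ne_of_ne (fun h => hiIm ⟨r, hr, h⟩)
                (fun h => hip ⟨r, hr, h⟩)⟩
          · rintro ⟨u, ⟨r, hr, rfl⟩, rfl⟩
            refine ⟨r, hr, ?_⟩
            rw [hb r hr, Equiv.swap_apply_of_ne_of_ne (fun h => hiIm ⟨r, hr, h⟩)
              (fun h => hip ⟨r, hr, h⟩)]
    show (Finset.range k).image (bump k i (mword k rest)) = _
    rw [himg, hIm, Finset.image_image]
    refine Finset.image_congr fun x hx => ?_
    show Equiv.swap i (i + 1) (wordPerm rest x) = wordPerm (i :: rest) x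
    rw [wordPerm_cons]
    rfl

end Aux

/-- for the one-column shape `(1ᵏ)`, the β-character of the K-Demazure
crystal of any reduced word `(i₁,…,iℓ)` of `w ∈ Sₙ` is the Lascoux polynomial
`ϖ_{i₁} ⋯ ϖ_{iℓ}(x₁⋯x_k)`.  In particular, for any reduced word of the longest element
`w₀`, the K-Demazure crystal is all of `SVT^n((1ᵏ))` and
`ϖ_{w₀}(x₁⋯x_k) = 𝔊_{(1ᵏ)}(x₁,…,xₙ;β)`. -/
theorem kdem_column_character (n k : ℕ) (hn : 2 ≤ n) (hk1 : 1 ≤ k) (hkn : k ≤ n)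
    (DL : ℕ → KPoly → KPoly) (hDL : IsDLOp n DL) :
    (∀ (w : Equiv.Perm ℕ) (word : List ℕ), IsReducedWord n w word →
      charSet n (colShape k) (KDem n (colShape k) (eK n (colShape k)) word) =
        applyDL DL word (∏ j ∈ Finset.Icc 1 k, (MvPolynomial.X j : KPoly))) ∧
    (∀ word0 : List ℕ, IsReducedWord n (wordPerm word0) word0 →
      (∀ x, 1 ≤ x → x ≤ n → wordPerm word0 x = n + 1 - x) →
      KDem n (colShape k) (eK n (colShape k)) word0 = {t | IsSVT n (colShape k) t} ∧
      applyDL DL word0 (∏ j ∈ Finset.Icc 1 k, (MvPolynomial.X j : KPoly)) =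
        Groth n (colShape k)) := by
  constructor
  · intro w word hred
    exact (main_lemma hDL hk1 hkn word hred.1).2
  · intro word0 hred hw0
    obtain ⟨hset, hchar⟩ := main_lemma hDL hk1 hkn word0 hred.1
    have hIm := image_mword hk1 hkn word0 hred
    have hIm2 : (Finset.Icc 1 k).image (fun x => wordPerm word0 x)
        = Finset.Icc (n + 1 - k) n := by
      ext y
      simp only [Finset.mem_image, Finset.mem_Icc]
      constructor
      · rintro ⟨x, ⟨h1, h2⟩, rfl⟩
        rw [hw0 x h1 (by omega)]
        omega
      · intro hy
        refine ⟨n + 1 - y, ⟨by omega, by omega⟩, ?_⟩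
        rw [hw0 (n + 1 - y) (by omega) (by omega)]
        omega
    have hMmem : ∀ r, r < k → n + 1 - k ≤ mword k word0 r ∧ mword k word0 r ≤ n := by
      intro r hr
      have hmm : mword k word0 r ∈ (Finset.range k).image (mword k word0) :=
        Finset.mem_image.mpr ⟨r, Finset.mem_range.mpr hr, rfl⟩
      rw [hIm, hIm2] at hmm
      exact Finset.mem_Icc.mp hmm
    have hMge : ∀ r, r < k → n + 1 - k + r ≤ mword k word0 r := by
      intro r
      induction r with
      | zero =>
        intro h
        have := (hMmem 0 h).1
        omega
      | succ r ih =>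
        intro h
        have h1 := ih (by omega)
        have h2 := mword_mono word0 r h
        omega
    have hbound : ∀ t : Filling, IsSVT n (colShape k) t →
        ∀ r < k, ∀ a ∈ t r 0, a ≤ mword k word0 r := by
      intro t ht r hr a ha
      have hchain : ∀ d r' a', a' ∈ t r' 0 → r' + d < k → a' + d ≤ n := by
        intro d
        induction d with
        | zero =>
          intro r' a' ha' h'
          have := (ht.entryBounds _ _ _ ha').2
          omega
        | succ d ihd =>
          intro r' a' ha' h'
          obtain ⟨b, hb⟩ := ht.boxNonempty (r' + 1) 0 (colShape_pos_iff.mpr (by omega))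
          have h1 := ht.colStrict r' 0 a' b ha' hb
          have h2 := ihd (r' + 1) b hb (by omega)
          omega
      have h3 := hchain (k - 1 - r) r a ha (by omega)
      have h4 := hMge r hr
      omega
    have hkdem : KDem n (colShape k) (eK n (colShape k)) word0
        = {t : Filling | IsSVT n (colShape k) t} := by
      rw [hset]
      ext t
      simp only [Dset, Set.mem_setOf_eq]
      exact ⟨fun h => h.1, fun h => ⟨h, hbound t h⟩⟩
    refine ⟨hkdem, ?_⟩
    rw [← hchar, hkdem]
    rfl

end SVTCrystal

end
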